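/- arXiv:1310.1585 — 2 statements merged into one kernel-verified Lean document; each statement's English description precedes it below -/
import Mathlib

section
/- Let q ≥ 3 be an integer and let v_1, …, v_n be points of ℝ∞ (n ≥ 1). Then there exist integers b_1, …, b_n such that v_1, …, v_n are the consecutive convergents of the Rosen continued fraction [b_1, …, b_n]_q if and only if ⟨∞, v_1, …, v_n⟩ is a path in the Farey graph 𝓕_q. Moreover, in that case the integers b_1, …, b_n are uniquely determined by v_1, …, v_n. -/
open OnePoint

noncomputable def lamq (q : ℕ) : ℝ := 2 * Real.cos (Real.pi / q)

abbrev RInf : Type := OnePoint ℝ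

noncomputable def sigmaFun : RInf → RInf := fun z =>
  match z with
  | Option.none => ((0 : ℝ) : RInf)
  | Option.some x => if x = 0 then (∞ : RInf) else ((-x⁻¹ : ℝ) : RInf)

lemma sigmaFun_invol (z : RInf) : sigmaFun (sigmaFun z) = z := by
  cases z with
  | none => simp [sigmaFun, OnePoint.infty] <;> rfl
  | some x =>
    by_cases h : x = 0
    · simp only [sigmaFun, h, if_true, if_pos]
      rfl
    · simp only [sigmaFun, h, if_false]
      have h1 : (-x⁻¹ : ℝ) ≠ 0 := by simpa using h
      simp only [h1, if_false]
      have h2 : (-(-x⁻¹)⁻¹ : ℝ) = x := by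
        rw [inv_neg, inv_inv, neg_neg]
      rw [h2]
      rfl

noncomputable def sigmaP : Equiv.Perm RInf :=
  ⟨sigmaFun, sigmaFun, sigmaFun_invol, sigmaFun_invol⟩

noncomputable def tauP (q : ℕ) : Equiv.Perm RInf where
  toFun z := match z with
    | Option.none => (∞ : RInf)
    | Option.some x => Option.some (x + lamq q)
  invFun z := match z with
    | Option.none => (∞ : RInf)
    | Option.some x => Option.some (x - lamq q)
  left_inv z := by cases z <;> simp [OnePoint.infty] <;> rfl
  right_inv z := by cases z <;> simp [OnePoint.infty] <;> rfl

noncomputable def Gq (q : ℕ) : Subgroup (Equiv.Perm RInf) :=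
  Subgroup.closure {sigmaP, tauP q}

def FareyVertex (q : ℕ) (v : RInf) : Prop := ∃ g ∈ Gq q, g ∞ = v

def FareyAdj (q : ℕ) (u v : RInf) : Prop :=
  u ≠ v ∧ ∃ g ∈ Gq q,
    ((g ((0:ℝ) : RInf) = u ∧ g ∞ = v) ∨ (g ((0:ℝ) : RInf) = v ∧ g ∞ = u))

noncomputable def rhoP (q : ℕ) : Equiv.Perm RInf := tauP q * sigmaP

def V0 (q : ℕ) : Set RInf := {v | ∃ i : ℕ, i < q ∧ (rhoP q ^ i) ∞ = v}

def IsFace (q : ℕ) (P : Set RInf) : Prop := ∃ g ∈ Gq q, P = ⇑g '' V0 q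

/-- `y` lies in the connected component of `ℝ∞ \ {u, v}` that does not contain `x`. -/
def SepSide (u v x y : RInf) : Prop :=
  y ∈ ({u, v}ᶜ : Set RInf) ∧ x ∉ connectedComponentIn ({u, v}ᶜ : Set RInf) y

noncomputable def Tq (q : ℕ) (b : ℤ) : RInf → RInf := fun z =>
  match z with
  | Option.none => ((b * lamq q : ℝ) : RInf)
  | Option.some x => if x = 0 then (∞ : RInf) else ((b * lamq q - x⁻¹ : ℝ) : RInf)

noncomputable def RosenValue (q : ℕ) (bs : List ℤ) : RInf := bs.foldr (Tq q) ∞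

def IsGeodesicRosen (q : ℕ) (bs : List ℤ) : Prop :=
  bs ≠ [] ∧ RosenValue q bs ≠ ∞ ∧
  ∀ cs : List ℤ, cs ≠ [] → RosenValue q cs = RosenValue q bs → bs.length ≤ cs.length

def IsPathFrom (q : ℕ) (p : List RInf) (x y : RInf) : Prop :=
  p.Chain' (FareyAdj q) ∧ p.head? = Option.some x ∧ p.getLast? = Option.some y

def IsGeodesicPath (q : ℕ) (p : List RInf) (x y : RInf) : Prop :=
  IsPathFrom q p x y ∧ ∀ p' : List RInf, IsPathFrom q p' x y → p.length ≤ p'.length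

/-- `{u, v}` is a pair of `y`-parents of `x`. -/
def IsParentPair (q : ℕ) (y x u v : RInf) : Prop :=
  ∃ g ∈ Gq q, ∃ i : ℤ,
    g ((rhoP q ^ i) ∞) = x ∧
    ({u, v} : Set RInf) = {g ((rhoP q ^ (i-1)) ∞), g ((rhoP q ^ (i+1)) ∞)} ∧
    SepSide u v x y

/-- `P 0, …, P (n-1)` is the q-chain from `x` to `y`. -/
def IsQChain (q : ℕ) (x y : RInf) (n : ℕ) (P : ℕ → Set RInf) : Prop :=
  1 ≤ n ∧ (∀ j < n, IsFace q (P j)) ∧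
  (∃ g ∈ Gq q, ∃ i : ℤ,
      g ((rhoP q ^ i) ∞) = x ∧ P 0 = ⇑g '' V0 q ∧
      SepSide (g ((rhoP q ^ (i-1)) ∞)) (g ((rhoP q ^ (i+1)) ∞)) x y) ∧
  y ∈ P (n-1) ∧ (∀ j, j < n - 1 → y ∉ P j) ∧
  (∀ j, j + 1 < n → ∃ a b : RInf, FareyAdj q a b ∧ a ∈ P j ∧ b ∈ P j ∧
      (y ∈ ({a, b}ᶜ : Set RInf) ∧
        ∀ w ∈ P j, w ∉ connectedComponentIn ({a, b}ᶜ : Set RInf) y) ∧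
      P (j+1) ≠ P j ∧ a ∈ P (j+1) ∧ b ∈ P (j+1))

/-- Fibonacci numbers with `F 0 = 1`, `F 1 = 2`. -/
def fibF : ℕ → ℕ
  | 0 => 1
  | 1 => 2
  | (n+2) => fibF (n+1) + fibF n


/-! ### Basic application lemmas -/

lemma infty_ne_zero : (∞ : RInf) ≠ ((0:ℝ) : RInf) := by
  intro h; exact OnePoint.infty_ne_coe 0 h

lemma some_ne_infty (x : ℝ) : ((x : ℝ) : RInf) ≠ (∞ : RInf) := by
  intro h; exact OnePoint.coe_ne_infty x h

lemma sigmaP_infty : sigmaP (∞ : RInf) = ((0:ℝ) : RInf) := rfl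

lemma sigmaP_apply (z : RInf) : sigmaP z = sigmaFun z := rfl

lemma sigmaP_zero : sigmaP ((0:ℝ) : RInf) = (∞ : RInf) := by
  rw [sigmaP_apply]; simp [sigmaFun]

lemma sigmaP_some {x : ℝ} (h : x ≠ 0) :
    sigmaP ((x : ℝ) : RInf) = ((-x⁻¹ : ℝ) : RInf) := by
  rw [sigmaP_apply]; simp [sigmaFun, h]

lemma tauP_infty (q : ℕ) : tauP q (∞ : RInf) = (∞ : RInf) := rfl

lemma tauP_some (q : ℕ) (x : ℝ) :
    tauP q ((x : ℝ) : RInf) = ((x + lamq q : ℝ) : RInf) := rfl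

lemma tauP_inv_infty (q : ℕ) : (tauP q)⁻¹ (∞ : RInf) = (∞ : RInf) := rfl

lemma tauP_inv_some (q : ℕ) (x : ℝ) :
    (tauP q)⁻¹ ((x : ℝ) : RInf) = ((x - lamq q : ℝ) : RInf) := rfl

lemma sigmaP_mul_self : sigmaP * sigmaP = 1 := by
  ext z
  exact sigmaFun_invol z

lemma sigmaP_inv : sigmaP⁻¹ = sigmaP :=
  inv_eq_iff_mul_eq_one.mpr sigmaP_mul_self

lemma tauP_zpow_infty (q : ℕ) (k : ℤ) : ((tauP q) ^ k) (∞ : RInf) = (∞ : RInf) := by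
  induction k using Int.induction_on with
  | zero => rfl
  | succ n ih =>
      rw [zpow_add_one, Equiv.Perm.mul_apply, tauP_infty]
      exact ih
  | pred n ih =>
      rw [zpow_sub_one, Equiv.Perm.mul_apply]
      rw [show ((tauP q)⁻¹ (∞ : RInf)) = (∞ : RInf) from rfl]
      exact ih

lemma tauP_zpow_some (q : ℕ) (k : ℤ) (x : ℝ) :
    ((tauP q) ^ k) ((x : ℝ) : RInf) = ((x + k * lamq q : ℝ) : RInf) := by
  have H : ∀ (k : ℤ) (x : ℝ),
      ((tauP q) ^ k) ((x : ℝ) : RInf) = ((x + k * lamq q : ℝ) : RInf) := by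
    intro k
    induction k using Int.induction_on with
    | zero => intro x; simp
    | succ n ih =>
        intro x
        rw [zpow_add_one, Equiv.Perm.mul_apply, tauP_some, ih]
        norm_num; push_cast; ring
    | pred n ih =>
        intro x
        rw [zpow_sub_one, Equiv.Perm.mul_apply, tauP_inv_some, ih]
        norm_num; push_cast; ring
  exact H k x

lemma sigmaP_mem (q : ℕ) : sigmaP ∈ Gq q :=
  Subgroup.subset_closure (by simp)

lemma tauP_mem (q : ℕ) : tauP q ∈ Gq q :=
  Subgroup.subset_closure (by simp)

lemma rhoP_mem (q : ℕ) : rhoP q ∈ Gq q :=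
  mul_mem (tauP_mem q) (sigmaP_mem q)


/-! ### The Chebyshev-type sequence -/

noncomputable def sQ (q : ℕ) : ℕ → ℝ
  | 0 => 0
  | 1 => 1
  | (i+2) => lamq q * sQ q (i+1) - sQ q i

section SqFacts

variable {q : ℕ} (hq : 3 ≤ q)

lemma pi_div_q_pos (hq : 3 ≤ q) : 0 < Real.pi / q := by
  apply div_pos Real.pi_pos
  exact_mod_cast Nat.lt_of_lt_of_le (by norm_num) hq

lemma sin_pi_div_q_pos (hq : 3 ≤ q) : 0 < Real.sin (Real.pi / q) := by
  apply Real.sin_pos_of_pos_of_lt_pi (pi_div_q_pos hq)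
  have h1 : (1:ℝ) < q := by exact_mod_cast Nat.lt_of_lt_of_le (by norm_num) hq
  rw [div_lt_iff₀ (by linarith)]
  nlinarith [Real.pi_pos]

lemma sQ_mul_sin (hq : 3 ≤ q) (i : ℕ) :
    sQ q i * Real.sin (Real.pi / q) = Real.sin (i * (Real.pi / q)) := by
  induction i using Nat.strong_induction_on with
  | _ i ih =>
    match i with
    | 0 => simp [sQ]
    | 1 => simp [sQ]
    | (i+2) =>
      have h1 := ih (i+1) (by omega)
      have h0 := ih i (by omega)
      have key : Real.sin ((i+2) * (Real.pi / q)) =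
          2 * Real.cos (Real.pi / q) * Real.sin ((i+1) * (Real.pi / q))
            - Real.sin (i * (Real.pi / q)) := by
        have e1 : ((i:ℝ)+2) * (Real.pi / q) = (i+1) * (Real.pi / q) + Real.pi / q := by ring
        have e2 : (i:ℝ) * (Real.pi / q) = (i+1) * (Real.pi / q) - Real.pi / q := by ring
        rw [e1, e2, Real.sin_add, Real.sin_sub]
        push_cast
        ring
      show (lamq q * sQ q (i+1) - sQ q i) * Real.sin (Real.pi / q) = _
      push_cast at h1 h0 key ⊢
      rw [key, ← h1, ← h0, lamq]
      ring

lemma sQ_pos (hq : 3 ≤ q) {i : ℕ} (h1 : 1 ≤ i) (h2 : i ≤ q - 1) : 0 < sQ q i := by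
  have hs := sin_pi_div_q_pos hq
  have key := sQ_mul_sin hq i
  have hpos : 0 < Real.sin (i * (Real.pi / q)) := by
    apply Real.sin_pos_of_pos_of_lt_pi
    · exact mul_pos (by exact_mod_cast h1 : (0:ℝ) < i) (pi_div_q_pos hq)
    · have hiq : (i:ℝ) < q := by
        have : i < q := by omega
        exact_mod_cast this
      have hq0 : (0:ℝ) < q := by positivity
      calc (i:ℝ) * (Real.pi / q) < q * (Real.pi / q) := by
            apply mul_lt_mul_of_pos_right hiq (pi_div_q_pos hq)
        _ = Real.pi := by field_simp
  nlinarith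

lemma sQ_q_eq (hq : 3 ≤ q) : sQ q q = 0 := by
  have hs := sin_pi_div_q_pos hq
  have key := sQ_mul_sin hq q
  have h0 : Real.sin (q * (Real.pi / q)) = 0 := by
    have hq0 : (q:ℝ) ≠ 0 := by positivity
    rw [mul_div_cancel₀ _ hq0, Real.sin_pi]
  rw [h0] at key
  rcases mul_eq_zero.mp key with h | h
  · exact h
  · exact absurd h (ne_of_gt hs)


lemma sQ_nonneg' (hq : 3 ≤ q) {i : ℕ} (h2 : i ≤ q) : 0 ≤ sQ q i := by
  rcases Nat.eq_zero_or_pos i with h | h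
  · simp [h, sQ]
  rcases Nat.lt_or_ge i q with h' | h'
  · exact le_of_lt (sQ_pos hq h (by omega))
  · have hiq : i = q := by omega
    rw [hiq, sQ_q_eq hq]

lemma sQ_qm1_eq (hq : 3 ≤ q) : sQ q (q-1) = 1 := by
  have hs := sin_pi_div_q_pos hq
  have key := sQ_mul_sin hq (q-1)
  have h0 : Real.sin ((q-1 : ℕ) * (Real.pi / q)) = Real.sin (Real.pi / q) := by
    have e : ((q-1 : ℕ) : ℝ) * (Real.pi / q) = Real.pi - Real.pi / q := by
      have : ((q-1 : ℕ) : ℝ) = (q : ℝ) - 1 := by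
        have : (1:ℕ) ≤ q := by omega
        push_cast [Nat.cast_sub this]
        ring
      rw [this]
      have hq0 : (q:ℝ) ≠ 0 := by positivity
      field_simp
    rw [e, Real.sin_pi_sub]
  rw [h0] at key
  have := mul_right_cancel₀ (ne_of_gt hs) (key.trans (one_mul _).symm)
  exact this

lemma sQ_qm2_eq (hq : 3 ≤ q) : sQ q (q-2) = lamq q := by
  have hs := sin_pi_div_q_pos hq
  have key := sQ_mul_sin hq (q-2)
  have h0 : Real.sin ((q-2 : ℕ) * (Real.pi / q)) =
      lamq q * Real.sin (Real.pi / q) := by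
    have e : ((q-2 : ℕ) : ℝ) * (Real.pi / q) = Real.pi - 2 * (Real.pi / q) := by
      have : ((q-2 : ℕ) : ℝ) = (q : ℝ) - 2 := by
        have h2 : (2:ℕ) ≤ q := by omega
        push_cast [Nat.cast_sub h2]
        ring
      rw [this]
      have hq0 : (q:ℝ) ≠ 0 := by positivity
      field_simp
    rw [e, Real.sin_pi_sub, two_mul, Real.sin_add, lamq]
    ring
  rw [h0] at key
  exact mul_right_cancel₀ (ne_of_gt hs) key

lemma sQ_det (q : ℕ) (i : ℕ) : sQ q (i+1) ^ 2 - sQ q (i+2) * sQ q i = 1 := by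
  induction i with
  | zero => simp [sQ]
  | succ n ih =>
    have hrec : sQ q (n+3) = lamq q * sQ q (n+2) - sQ q (n+1) := rfl
    have hrec2 : sQ q (n+2) = lamq q * sQ q (n+1) - sQ q n := rfl
    show sQ q (n+2) ^ 2 - sQ q (n+3) * sQ q (n+1) = 1
    linear_combination ih - sQ q (n+1) * hrec + sQ q (n+2) * hrec2

lemma sQ_e (q : ℕ) (i : ℕ) : sQ q (i+3) * sQ q i - sQ q (i+2) * sQ q (i+1) = -(lamq q) := by
  induction i with
  | zero =>
    show sQ q 3 * sQ q 0 - sQ q 2 * sQ q 1 = -(lamq q)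
    simp [sQ]
  | succ n ih =>
    have hrec : sQ q (n+4) = lamq q * sQ q (n+3) - sQ q (n+2) := rfl
    have hrec2 : sQ q (n+2) = lamq q * sQ q (n+1) - sQ q n := rfl
    show sQ q (n+4) * sQ q (n+1) - sQ q (n+3) * sQ q (n+2) = -(lamq q)
    linear_combination ih + sQ q (n+1) * hrec - sQ q (n+3) * hrec2

lemma lamq_pos (hq : 3 ≤ q) : 0 < lamq q := by
  have h1 : (0:ℝ) < Real.pi / q := pi_div_q_pos hq
  have h2 : Real.pi / q < Real.pi / 2 := by
    apply div_lt_div_of_pos_left Real.pi_pos (by norm_num)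
    exact_mod_cast Nat.lt_of_lt_of_le (by norm_num) hq
  have := Real.cos_pos_of_mem_Ioo ⟨by linarith, h2⟩
  rw [lamq]; linarith

lemma lamq_ne (hq : 3 ≤ q) : lamq q ≠ 0 := ne_of_gt (lamq_pos hq)

end SqFacts


/-! ### Powers of rho -/

lemma rhoP_infty (q : ℕ) : rhoP q (∞ : RInf) = ((lamq q : ℝ) : RInf) := by
  show tauP q (sigmaP ∞) = _
  rw [sigmaP_infty, tauP_some, zero_add]

lemma rhoP_zero (q : ℕ) : rhoP q ((0:ℝ) : RInf) = (∞ : RInf) := by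
  show tauP q (sigmaP ((0:ℝ) : RInf)) = _
  rw [sigmaP_zero, tauP_infty]

lemma rhoP_some {q : ℕ} {x : ℝ} (h : x ≠ 0) :
    rhoP q ((x : ℝ) : RInf) = ((-x⁻¹ + lamq q : ℝ) : RInf) := by
  show tauP q (sigmaP ((x:ℝ) : RInf)) = _
  rw [sigmaP_some h, tauP_some]

lemma some_inj {x y : ℝ} (h : ((x:ℝ) : RInf) = ((y:ℝ) : RInf)) : x = y :=
  Option.some_injective _ h

lemma sQ_zero (q : ℕ) : sQ q 0 = 0 := rfl
lemma sQ_one (q : ℕ) : sQ q 1 = 1 := rfl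
lemma sQ_two (q : ℕ) : sQ q 2 = lamq q := by
  show lamq q * sQ q 1 - sQ q 0 = lamq q
  rw [sQ_one, sQ_zero]; ring
lemma sQ_rec (q : ℕ) (i : ℕ) : sQ q (i+2) = lamq q * sQ q (i+1) - sQ q i := rfl

lemma rho_pow_formula {q : ℕ} (hq : 3 ≤ q) (i : ℕ) (h1 : 1 ≤ i) (h2 : i ≤ q - 1) :
    ((rhoP q ^ i) (∞:RInf) = ((sQ q (i+1) / sQ q i : ℝ) : RInf)) ∧
    (∀ x : ℝ,
      (sQ q i * x - sQ q (i-1) = 0 → (rhoP q ^ i) ((x:ℝ):RInf) = (∞ : RInf)) ∧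
      (sQ q i * x - sQ q (i-1) ≠ 0 → (rhoP q ^ i) ((x:ℝ):RInf) =
          (((sQ q (i+1) * x - sQ q i) / (sQ q i * x - sQ q (i-1)) : ℝ) : RInf))) := by
  induction i, h1 using Nat.le_induction with
  | base =>
    constructor
    · rw [pow_one, rhoP_infty, sQ_one, sQ_two]
      norm_num
    · intro x
      constructor
      · intro hx
        rw [sQ_one, sQ_zero] at hx
        have hx0 : x = 0 := by linarith
        rw [pow_one, hx0]
        exact_mod_cast rhoP_zero q
      · intro hx
        rw [sQ_one, sQ_zero] at hx ⊢
        have hx0 : x ≠ 0 := by intro h; apply hx; rw [h]; ring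
        rw [pow_one, rhoP_some hx0]
        congr 1
        rw [sQ_two]
        field_simp
        ring
  | succ i hi ih =>
    have h2' : i ≤ q - 1 := by omega
    specialize ih h2'
    obtain ⟨j, rfl⟩ : ∃ j, i = j + 1 := ⟨i - 1, by omega⟩
    -- abbreviations: s0 = sQ q j, s1 = sQ q (j+1), s2 = sQ q (j+2), s3 = sQ q (j+3)
    have hs1 : 0 < sQ q (j+1) := sQ_pos hq (by omega) (by omega)
    have hs2 : 0 < sQ q (j+2) := sQ_pos hq (by omega) (by omega)
    have hs3 : 0 ≤ sQ q (j+3) := sQ_nonneg' hq (by omega)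
    have hpow : ∀ z : RInf, (rhoP q ^ (j+2)) z = rhoP q ((rhoP q ^ (j+1)) z) := by
      intro z
      rw [pow_succ' (rhoP q) (j+1), Equiv.Perm.mul_apply]
    constructor
    · rw [hpow, ih.1]
      have hy : (sQ q (j+2) / sQ q (j+1) : ℝ) ≠ 0 := by positivity
      rw [rhoP_some hy]
      congr 1
      rw [sQ_rec q (j+1)]
      field_simp
      ring
    · intro x
      have ihx := ih.2 x
      -- notation for denominators
      constructor
      · -- new denominator zero → infinity
        intro hD
        have hD' : sQ q (j+2) * x - sQ q (j+1) = 0 := by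
          simpa using hD
        -- old denominator cannot be zero
        have hold : sQ q (j+1) * x - sQ q j ≠ 0 := by
          intro h0
          have hDs : (sQ q (j+2) * x - sQ q (j+1)) * sQ q (j+1) = -1 := by
            linear_combination sQ q (j+2) * h0 - sQ_det q j
          rw [hD'] at hDs
          norm_num at hDs
        have := ihx.2 hold
        rw [hpow, this]
        have hy0 : ((sQ q (j+1+1) * x - sQ q (j+1)) / (sQ q (j+1) * x - sQ q (j+1-1)) : ℝ) = 0 := by
          simp only [show j+1-1 = j from rfl]
          rw [div_eq_zero_iff]
          left
          simpa using hD'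
        rw [hy0]
        exact_mod_cast rhoP_zero q
      · intro hD
        have hD' : sQ q (j+2) * x - sQ q (j+1) ≠ 0 := by
          simpa using hD
        by_cases hold : sQ q (j+1) * x - sQ q j = 0
        · -- old denominator zero : rho^{j+1} x = infty, rho infty = lamq
          have := ihx.1 (by simpa using hold)
          rw [hpow, this, rhoP_infty]
          have hDs : (sQ q (j+2) * x - sQ q (j+1)) * sQ q (j+1) = -1 := by
            linear_combination sQ q (j+2) * hold - sQ_det q j
          congr 1
          simp only [show j+1+1-1 = j+1 from rfl, show j+1+1 = j+2 from rfl,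
            show j+1+1+1 = j+3 from rfl] at hD ⊢
          rw [eq_div_iff hD']
          have key : (sQ q (j+3) * x - sQ q (j+2) - lamq q * (sQ q (j+2) * x - sQ q (j+1)))
              * sQ q (j+1) = 0 := by
            linear_combination (sQ q (j+3) - lamq q * sQ q (j+2)) * hold + sQ_e q j
              + lamq q * sQ_det q j
          have h0 := (mul_eq_zero.mp key).resolve_right (ne_of_gt hs1)
          linarith [h0]
        · have holdne : sQ q (j+1) * x - sQ q j ≠ 0 := hold
          have heq := ihx.2 (by simpa using hold)
          rw [hpow, heq]
          simp only [show j+1-1 = j from rfl, show j+1+1 = j+2 from rfl] at *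
          have hy : ((sQ q (j+2) * x - sQ q (j+1)) / (sQ q (j+1) * x - sQ q j) : ℝ) ≠ 0 :=
            div_ne_zero hD' holdne
          rw [rhoP_some hy]
          congr 1
          simp only [show j+2-1 = j+1 from rfl, show j+2+1 = j+3 from rfl]
          have hrec : sQ q (j+3) = lamq q * sQ q (j+2) - sQ q (j+1) := rfl
          have hrec2 : sQ q (j+2) = lamq q * sQ q (j+1) - sQ q j := rfl
          rw [inv_div, eq_div_iff hD', add_mul, neg_mul, div_mul_cancel₀ _ hD']
          linear_combination (-x) * hrec + hrec2


/-! ### Consequences of the formula -/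

lemma rho_pow_qm1 {q : ℕ} (hq : 3 ≤ q) : (rhoP q) ^ (q-1) = sigmaP * (tauP q)⁻¹ := by
  have hF := rho_pow_formula hq (q-1) (by omega) le_rfl
  apply Equiv.ext
  intro z
  cases z with
  | none =>
    show (rhoP q ^ (q-1)) (∞ : RInf) = sigmaP ((tauP q)⁻¹ (∞ : RInf))
    rw [hF.1, tauP_inv_infty, sigmaP_infty]
    rw [sQ_qm1_eq hq]
    have hq1 : q - 1 + 1 = q := by omega
    rw [hq1, sQ_q_eq hq]
    norm_num
  | some x =>
    show (rhoP q ^ (q-1)) ((x:ℝ) : RInf) = sigmaP ((tauP q)⁻¹ ((x:ℝ) : RInf))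
    have hden : sQ q (q-1) * x - sQ q (q-1-1) = x - lamq q := by
      rw [sQ_qm1_eq hq, show q-1-1 = q-2 by omega, sQ_qm2_eq hq]
      ring
    by_cases hx : x - lamq q = 0
    · rw [(hF.2 x).1 (by rw [hden]; exact hx)]
      rw [tauP_inv_some]
      have : (x - lamq q : ℝ) = 0 := hx
      rw [this, sigmaP_zero]
    · rw [(hF.2 x).2 (by rw [hden]; exact hx)]
      rw [tauP_inv_some, sigmaP_some hx]
      congr 1
      rw [hden, sQ_qm1_eq hq, show q-1+1 = q by omega, sQ_q_eq hq]
      field_simp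
      ring

lemma rho_pow_q {q : ℕ} (hq : 3 ≤ q) : (rhoP q) ^ q = 1 := by
  have : (rhoP q) ^ q = (rhoP q) ^ (q-1) * rhoP q := by
    rw [← pow_succ, show q - 1 + 1 = q by omega]
  rw [this, rho_pow_qm1 hq, rhoP, ← mul_assoc, mul_assoc sigmaP _ _, inv_mul_cancel,
    mul_one, sigmaP_mul_self]

lemma tau_eq_rho_sigma (q : ℕ) : rhoP q * sigmaP = tauP q := by
  rw [rhoP, mul_assoc, sigmaP_mul_self, mul_one]

lemma rho_pow_inf_pos {q : ℕ} (hq : 3 ≤ q) {a : ℕ} (h1 : 1 ≤ a) (h2 : a ≤ q-2) :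
    ∃ c : ℝ, 0 < c ∧ (rhoP q ^ a) (∞ : RInf) = ((c:ℝ) : RInf) := by
  refine ⟨sQ q (a+1) / sQ q a, ?_, (rho_pow_formula hq a h1 (by omega)).1⟩
  exact div_pos (sQ_pos hq (by omega) (by omega)) (sQ_pos hq h1 (by omega))

lemma rho_pow_zero_pos {q : ℕ} (hq : 3 ≤ q) {a : ℕ} (h1 : 2 ≤ a) (h2 : a ≤ q-1) :
    ∃ c : ℝ, 0 < c ∧ (rhoP q ^ a) (((0:ℝ)) : RInf) = ((c:ℝ) : RInf) := by
  have hsplit : (rhoP q ^ a) (((0:ℝ)) : RInf) = (rhoP q ^ (a-1)) (∞ : RInf) := by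
    have : (rhoP q) ^ a = (rhoP q) ^ (a-1) * rhoP q := by
      rw [← pow_succ, show a - 1 + 1 = a by omega]
    rw [this, Equiv.Perm.mul_apply, rhoP_zero]
  rw [hsplit]
  exact rho_pow_inf_pos hq (by omega) (by omega)

lemma rho_pow_neg_pos {q : ℕ} (hq : 3 ≤ q) {a : ℕ} (h1 : 1 ≤ a) (h2 : a ≤ q-1)
    {x : ℝ} (hx : x < 0) :
    ∃ c : ℝ, 0 < c ∧ (rhoP q ^ a) (((x:ℝ)) : RInf) = ((c:ℝ) : RInf) := by
  have hsa : 0 < sQ q a := sQ_pos hq h1 h2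
  have hsa1 : 0 ≤ sQ q (a+1) := sQ_nonneg' hq (by omega)
  have hsam : 0 ≤ sQ q (a-1) := sQ_nonneg' hq (by omega)
  have hden : sQ q a * x - sQ q (a-1) < 0 := by nlinarith
  have hnum : sQ q (a+1) * x - sQ q a < 0 := by nlinarith
  refine ⟨_, ?_, (rho_pow_formula hq a h1 h2).2 x |>.2 (ne_of_lt hden)⟩
  exact div_pos_of_neg_of_neg hnum hden


/-! ### Words in sigma and rho -/

noncomputable def letterP (q : ℕ) (a : ℕ) : Equiv.Perm RInf :=
  if a = 0 then sigmaP else (rhoP q)^a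

noncomputable def evalW (q : ℕ) (l : List ℕ) : Equiv.Perm RInf :=
  (l.map (letterP q)).prod

def ValidW (q : ℕ) (l : List ℕ) : Prop :=
  (∀ a ∈ l, a ≤ q - 1) ∧ l.Chain' (fun a b => a = 0 ↔ b ≠ 0)

def InvW (q : ℕ) (l : List ℕ) : Prop :=
  (l = []) ∨
  (∃ k : ℤ, 1 ≤ k ∧ evalW q l = (tauP q)^k ∧ l.head? = Option.some 1) ∨
  (∃ k : ℤ, k ≤ -1 ∧ evalW q l = (tauP q)^k ∧ l.head? = Option.some 0) ∨
  (∃ j : ℤ, 0 ≤ j ∧ evalW q l = sigmaP * (tauP q)^j ∧ l.head? = Option.some 0) ∨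
  (∃ j : ℤ, j ≤ -1 ∧ evalW q l = sigmaP * (tauP q)^j ∧ l.head? = Option.some (q-1)) ∨
  (l.head? = Option.some 0 ∧ ∃ x : ℝ, x < 0 ∧ evalW q l (∞ : RInf) = ((x:ℝ):RInf)) ∨
  (∃ a : ℕ, a ≠ 0 ∧ l.head? = Option.some a ∧ ∃ x : ℝ, 0 < x ∧ evalW q l (∞ : RInf) = ((x:ℝ):RInf))

def InvS (q : ℕ) (l : List ℕ) : Prop := ∀ n : ℕ, InvW q (l.drop n)

lemma letterP_zero (q : ℕ) : letterP q 0 = sigmaP := if_pos rfl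

lemma letterP_pos (q : ℕ) {a : ℕ} (h : a ≠ 0) : letterP q a = (rhoP q)^a := if_neg h

lemma evalW_nil (q : ℕ) : evalW q [] = 1 := rfl

lemma evalW_cons (q : ℕ) (a : ℕ) (t : List ℕ) :
    evalW q (a :: t) = letterP q a * evalW q t := by
  simp [evalW]

lemma validW_tail {q : ℕ} {a : ℕ} {t : List ℕ} (h : ValidW q (a :: t)) : ValidW q t := by
  refine ⟨fun b hb => h.1 b (List.mem_cons_of_mem a hb), ?_⟩
  have := h.2
  unfold List.Chain' at this
  rw [List.isChain_cons] at this
  exact this.2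

lemma validW_rel {q : ℕ} {a b : ℕ} {t : List ℕ} (h : ValidW q (a :: t))
    (hb : t.head? = Option.some b) : (a = 0 ↔ b ≠ 0) := by
  have := h.2
  unfold List.Chain' at this
  rw [List.isChain_cons] at this
  exact this.1 b hb

lemma transW {q : ℕ} (hq : 3 ≤ q) (a : ℕ) (t : List ℕ)
    (hv : ValidW q (a :: t)) (ht : InvW q t) : InvW q (a :: t) := by
  have hec : evalW q (a :: t) = letterP q a * evalW q t := evalW_cons q a t
  have hqm1 : q - 1 ≠ 0 := by omega
  by_cases ha : a = 0
  · -- prepend sigma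
    subst ha
    rw [letterP_zero] at hec
    rcases ht with h | ⟨k,hk,he2,hh⟩ | ⟨k,hk,he2,hh⟩ | ⟨j,hj,he2,hh⟩ | ⟨j,hj,he2,hh⟩ |
      ⟨hh,x,hx,he2⟩ | ⟨b,hb,hh,x,hx,he2⟩
    · -- t = [] : new = sigma = sigma tau^0
      subst h
      refine Or.inr (Or.inr (Or.inr (Or.inl ⟨0, le_rfl, ?_, rfl⟩)))
      rw [hec, evalW_nil, zpow_zero]
    · -- t = tau^k, k ≥ 1 : new = sigma tau^k
      refine Or.inr (Or.inr (Or.inr (Or.inl ⟨k, by omega, ?_, rfl⟩)))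
      rw [hec, he2]
    · -- head t = 0 : blocked
      exact absurd ((validW_rel hv hh).mp rfl) (by simp)
    · exact absurd ((validW_rel hv hh).mp rfl) (by simp)
    · -- t = sigma tau^j, j ≤ -1, head q-1 : new = tau^j
      refine Or.inr (Or.inr (Or.inl ⟨j, hj, ?_, rfl⟩))
      rw [hec, he2, ← mul_assoc, sigmaP_mul_self, one_mul]
    · exact absurd ((validW_rel hv hh).mp rfl) (by simp)
    · -- value positive : new value negative
      refine Or.inr (Or.inr (Or.inr (Or.inr (Or.inr (Or.inl ⟨rfl, -x⁻¹, neg_lt_zero.mpr (inv_pos.mpr hx), ?_⟩)))))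
      rw [hec, Equiv.Perm.mul_apply, he2, sigmaP_some (ne_of_gt hx)]
  · -- prepend rho^a
    have ha1 : 1 ≤ a := Nat.one_le_iff_ne_zero.mpr ha
    have ha2 : a ≤ q - 1 := hv.1 a List.mem_cons_self
    rw [letterP_pos q ha] at hec
    rcases ht with h | ⟨k,hk,he2,hh⟩ | ⟨k,hk,he2,hh⟩ | ⟨j,hj,he2,hh⟩ | ⟨j,hj,he2,hh⟩ |
      ⟨hh,x,hx,he2⟩ | ⟨b,hb,hh,x,hx,he2⟩
    · -- t = []
      subst h
      by_cases haq : a = q - 1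
      · refine Or.inr (Or.inr (Or.inr (Or.inr (Or.inl ⟨-1, le_rfl, ?_, by simp [haq]⟩))))
        rw [hec, evalW_nil, mul_one, haq, rho_pow_qm1 hq, zpow_neg_one]
      · obtain ⟨c, hc, hcv⟩ := rho_pow_inf_pos hq ha1 (by omega)
        refine Or.inr (Or.inr (Or.inr (Or.inr (Or.inr (Or.inr ⟨a, ha, rfl, c, hc, ?_⟩)))))
        rw [hec, Equiv.Perm.mul_apply, evalW_nil, Equiv.Perm.one_apply, hcv]
    · -- head t = 1 : blocked
      exact absurd ((validW_rel hv hh).mpr (by simp)) ha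
    · -- t = tau^k, k ≤ -1
      by_cases haq : a = q - 1
      · refine Or.inr (Or.inr (Or.inr (Or.inr (Or.inl ⟨k - 1, by omega, ?_, by simp [haq]⟩))))
        rw [hec, he2, haq, rho_pow_qm1 hq, mul_assoc]
        congr 1
        rw [← zpow_neg_one, ← zpow_add]
        congr 1
        omega
      · obtain ⟨c, hc, hcv⟩ := rho_pow_inf_pos hq ha1 (by omega)
        refine Or.inr (Or.inr (Or.inr (Or.inr (Or.inr (Or.inr ⟨a, ha, rfl, c, hc, ?_⟩)))))
        rw [hec, Equiv.Perm.mul_apply, he2, tauP_zpow_infty, hcv]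
    · -- t = sigma tau^j, j ≥ 0
      by_cases ha1' : a = 1
      · refine Or.inr (Or.inl ⟨j + 1, by omega, ?_, by simp [ha1']⟩)
        rw [hec, he2, ha1', pow_one, ← mul_assoc, tau_eq_rho_sigma]
        rw [show tauP q * (tauP q)^j = (tauP q)^(1:ℤ) * (tauP q)^j by rw [zpow_one]]
        rw [← zpow_add]
        congr 1
        omega
      · obtain ⟨c, hc, hcv⟩ := rho_pow_zero_pos hq (by omega) ha2
        refine Or.inr (Or.inr (Or.inr (Or.inr (Or.inr (Or.inr ⟨a, ha, rfl, c, hc, ?_⟩)))))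
        rw [hec, Equiv.Perm.mul_apply, he2, Equiv.Perm.mul_apply, tauP_zpow_infty,
          sigmaP_infty, hcv]
    · -- head t = q-1 : blocked
      exact absurd ((validW_rel hv hh).mpr (by simpa using hqm1)) ha
    · -- value negative : new value positive
      obtain ⟨c, hc, hcv⟩ := rho_pow_neg_pos hq ha1 ha2 hx
      refine Or.inr (Or.inr (Or.inr (Or.inr (Or.inr (Or.inr ⟨a, ha, rfl, c, hc, ?_⟩)))))
      rw [hec, Equiv.Perm.mul_apply, he2, hcv]
    · -- head t = b ≠ 0 : blocked
      exact absurd ((validW_rel hv hh).mpr hb) ha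

lemma invS_nil (q : ℕ) : InvS q [] := fun n => Or.inl (by simp)

lemma invS_tail {q : ℕ} {a : ℕ} {t : List ℕ} (h : InvS q (a :: t)) : InvS q t :=
  fun n => h (n+1)

lemma invS_cons {q : ℕ} (hq : 3 ≤ q) {a : ℕ} {t : List ℕ}
    (hv : ValidW q (a :: t)) (ht : InvS q t) : InvS q (a :: t) := by
  intro n
  match n with
  | 0 => exact transW hq a t hv (ht 0)
  | n+1 => exact ht n


/-! ### Operations on words -/

lemma op_sigma {q : ℕ} (hq : 3 ≤ q) (l : List ℕ) (hv : ValidW q l) (hi : InvS q l) :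
    ∃ l', ValidW q l' ∧ InvS q l' ∧ evalW q l' = sigmaP * evalW q l := by
  match l with
  | [] =>
    refine ⟨[0], ⟨by intro a ha; simp at ha; omega, List.isChain_singleton 0⟩, ?_, ?_⟩
    · exact invS_cons hq ⟨by intro a ha; simp at ha; omega, List.isChain_singleton 0⟩ (invS_nil q)
    · rw [evalW_cons, letterP_zero]
  | 0 :: t =>
    refine ⟨t, validW_tail hv, invS_tail hi, ?_⟩
    rw [evalW_cons, letterP_zero, ← mul_assoc, sigmaP_mul_self, one_mul]
  | (a+1) :: t =>
    have hv' : ValidW q (0 :: (a+1) :: t) := by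
      refine ⟨?_, ?_⟩
      · intro b hb
        rcases List.mem_cons.mp hb with h | h
        · omega
        · exact hv.1 b h
      · unfold List.Chain'
        rw [List.isChain_cons_cons]
        exact ⟨by simp, hv.2⟩
    refine ⟨0 :: (a+1) :: t, hv', invS_cons hq hv' hi, ?_⟩
    rw [evalW_cons q 0, letterP_zero]

lemma op_rho_pow {q : ℕ} (hq : 3 ≤ q) (b : ℕ) (hb1 : 1 ≤ b) (hb2 : b ≤ q - 1)
    (l : List ℕ) (hv : ValidW q l) (hi : InvS q l) :
    ∃ l', ValidW q l' ∧ InvS q l' ∧ evalW q l' = (rhoP q)^b * evalW q l := by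
  match l with
  | [] =>
    have hv' : ValidW q [b] := ⟨by intro c hc; simp at hc; omega, List.isChain_singleton b⟩
    refine ⟨[b], hv', invS_cons hq hv' (invS_nil q), ?_⟩
    rw [evalW_cons, letterP_pos q (by omega)]
  | 0 :: t =>
    have hv' : ValidW q (b :: 0 :: t) := by
      refine ⟨?_, ?_⟩
      · intro c hc
        rcases List.mem_cons.mp hc with h | h
        · omega
        · exact hv.1 c h
      · unfold List.Chain'
        rw [List.isChain_cons_cons]
        exact ⟨by omega, hv.2⟩
    refine ⟨b :: 0 :: t, hv', invS_cons hq hv' hi, ?_⟩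
    rw [evalW_cons q b, letterP_pos q (by omega)]
  | (a+1) :: t =>
    have ha2 : a + 1 ≤ q - 1 := hv.1 (a+1) List.mem_cons_self
    have hvt : ValidW q t := validW_tail hv
    have hit : InvS q t := invS_tail hi
    have headrel : ∀ c, c ≠ 0 → c ≤ q - 1 → ValidW q (c :: t) := by
      intro c hc hcb
      refine ⟨?_, ?_⟩
      · intro d hd
        rcases List.mem_cons.mp hd with h | h
        · omega
        · exact hvt.1 d h
      · unfold List.Chain'
        rw [List.isChain_cons]
        refine ⟨?_, hvt.2⟩
        intro d hd
        have := validW_rel hv hd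
        constructor
        · intro h; exact absurd h hc
        · intro h
          exfalso
          exact h (by tauto)
    have hcomb : ∀ m : ℕ, 1 ≤ m → m ≤ q - 1 →
        evalW q (m :: t) = (rhoP q)^m * evalW q t := by
      intro m hm _
      rw [evalW_cons, letterP_pos q (by omega)]
    rcases Nat.lt_or_ge (a + 1 + b) q with hlt | hge
    · -- merge to a+1+b ≤ q-1
      have h1 : a + 1 + b ≤ q - 1 := by omega
      have hv' : ValidW q ((a+1+b) :: t) := headrel (a+1+b) (by omega) (by omega)
      refine ⟨(a+1+b) :: t, hv', invS_cons hq hv' hit, ?_⟩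
      rw [hcomb (a+1+b) (by omega) h1, hcomb (a+1) (by omega) ha2, ← mul_assoc, ← pow_add]
      congr 2
      omega
    · rcases Nat.eq_or_lt_of_le hge with heq | hgt
      · -- a+1+b = q : cancel completely
        refine ⟨t, hvt, hit, ?_⟩
        rw [hcomb (a+1) (by omega) ha2, ← mul_assoc, ← pow_add]
        rw [show b + (a+1) = q by omega, rho_pow_q hq, one_mul]
      · -- a+1+b > q : merge to a+1+b-q
        have h1 : 1 ≤ a + 1 + b - q := by omega
        have h2 : a + 1 + b - q ≤ q - 1 := by omega
        have hv' := headrel (a+1+b-q) (by omega) (by omega)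
        refine ⟨(a+1+b-q) :: t, hv', invS_cons hq hv' hit, ?_⟩
        rw [hcomb (a+1+b-q) h1 h2, hcomb (a+1) (by omega) ha2, ← mul_assoc, ← pow_add]
        congr 1
        rw [show b + (a+1) = q + (a+1+b-q) by omega, pow_add, rho_pow_q hq, one_mul]

lemma op_tau {q : ℕ} (hq : 3 ≤ q) (l : List ℕ) (hv : ValidW q l) (hi : InvS q l) :
    ∃ l', ValidW q l' ∧ InvS q l' ∧ evalW q l' = tauP q * evalW q l := by
  obtain ⟨l1, hv1, hi1, he1⟩ := op_sigma hq l hv hi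
  obtain ⟨l2, hv2, hi2, he2⟩ := op_rho_pow hq 1 le_rfl (by omega) l1 hv1 hi1
  refine ⟨l2, hv2, hi2, ?_⟩
  rw [he2, he1, pow_one, ← mul_assoc, tau_eq_rho_sigma]

lemma op_tau_inv {q : ℕ} (hq : 3 ≤ q) (l : List ℕ) (hv : ValidW q l) (hi : InvS q l) :
    ∃ l', ValidW q l' ∧ InvS q l' ∧ evalW q l' = (tauP q)⁻¹ * evalW q l := by
  obtain ⟨l1, hv1, hi1, he1⟩ := op_rho_pow hq (q-1) (by omega) le_rfl l hv hi
  obtain ⟨l2, hv2, hi2, he2⟩ := op_sigma hq l1 hv1 hi1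
  refine ⟨l2, hv2, hi2, ?_⟩
  rw [he2, he1, ← mul_assoc, rho_pow_qm1 hq, ← mul_assoc, sigmaP_mul_self, one_mul]

lemma mem_Gq_word {q : ℕ} (hq : 3 ≤ q) {g : Equiv.Perm RInf} (hg : g ∈ Gq q) :
    ∃ l, ValidW q l ∧ InvS q l ∧ evalW q l = g := by
  refine Subgroup.closure_induction_left (p := fun g _ => ∃ l, ValidW q l ∧ InvS q l ∧ evalW q l = g)
    ⟨[], ⟨by simp, List.isChain_nil⟩, invS_nil q, rfl⟩ ?_ ?_ hg
  · rintro x (rfl | rfl) y _ ⟨l, hv, hi, he⟩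
    · obtain ⟨l', h1, h2, h3⟩ := op_sigma hq l hv hi
      exact ⟨l', h1, h2, by rw [h3, he]⟩
    · obtain ⟨l', h1, h2, h3⟩ := op_tau hq l hv hi
      exact ⟨l', h1, h2, by rw [h3, he]⟩
  · rintro x (rfl | rfl) y _ ⟨l, hv, hi, he⟩
    · obtain ⟨l', h1, h2, h3⟩ := op_sigma hq l hv hi
      exact ⟨l', h1, h2, by rw [h3, he, sigmaP_inv]⟩
    · obtain ⟨l', h1, h2, h3⟩ := op_tau_inv hq l hv hi
      exact ⟨l', h1, h2, by rw [h3, he]⟩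

/-! ### The stabilizer of infinity -/

lemma stab_infty {q : ℕ} (hq : 3 ≤ q) {g : Equiv.Perm RInf} (hg : g ∈ Gq q)
    (hfix : g (∞ : RInf) = (∞ : RInf)) : ∃ k : ℤ, g = (tauP q)^k := by
  obtain ⟨l, hv, hi, he⟩ := mem_Gq_word hq hg
  have h0 := hi 0
  rw [List.drop_zero] at h0
  rcases h0 with h | ⟨k,_,he2,_⟩ | ⟨k,_,he2,_⟩ | ⟨j,_,he2,_⟩ | ⟨j,_,he2,_⟩ |
    ⟨_,x,_,hx⟩ | ⟨a,_,_,x,_,hx⟩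
  · exact ⟨0, by rw [← he, h, evalW_nil, zpow_zero]⟩
  · exact ⟨k, by rw [← he, he2]⟩
  · exact ⟨k, by rw [← he, he2]⟩
  · exfalso
    have : g (∞ : RInf) = ((0:ℝ) : RInf) := by
      rw [← he, he2, Equiv.Perm.mul_apply, tauP_zpow_infty, sigmaP_infty]
    rw [hfix] at this
    exact infty_ne_zero this
  · exfalso
    have : g (∞ : RInf) = ((0:ℝ) : RInf) := by
      rw [← he, he2, Equiv.Perm.mul_apply, tauP_zpow_infty, sigmaP_infty]
    rw [hfix] at this
    exact infty_ne_zero this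
  · exact absurd (by rw [← he, hx] at hfix; exact hfix) (some_ne_infty x)
  · exact absurd (by rw [← he, hx] at hfix; exact hfix) (some_ne_infty x)

lemma stab_zero {q : ℕ} (hq : 3 ≤ q) {g : Equiv.Perm RInf} (hg : g ∈ Gq q)
    (hfix : g ((0:ℝ) : RInf) = (∞ : RInf)) : ∃ k : ℤ, g = (tauP q)^k * sigmaP := by
  have hmem : g * sigmaP ∈ Gq q := mul_mem hg (sigmaP_mem q)
  have hfix' : (g * sigmaP) (∞ : RInf) = (∞ : RInf) := by
    rw [Equiv.Perm.mul_apply, sigmaP_infty]; exact hfix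
  obtain ⟨k, hk⟩ := stab_infty hq hmem hfix'
  refine ⟨k, ?_⟩
  have := congrArg (· * sigmaP) hk
  simpa [mul_assoc, sigmaP_mul_self] using this


/-! ### Rosen continued fractions as group elements -/

noncomputable def TbP (q : ℕ) (b : ℤ) : Equiv.Perm RInf := (tauP q)^b * sigmaP

lemma TbP_zero (q : ℕ) (b : ℤ) : TbP q b ((0:ℝ) : RInf) = (∞ : RInf) := by
  rw [TbP, Equiv.Perm.mul_apply, sigmaP_zero, tauP_zpow_infty]

lemma TbP_infty (q : ℕ) (b : ℤ) : TbP q b (∞ : RInf) = ((b * lamq q : ℝ) : RInf) := by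
  rw [TbP, Equiv.Perm.mul_apply, sigmaP_infty, tauP_zpow_some, zero_add]

lemma TbP_mem (q : ℕ) (b : ℤ) : TbP q b ∈ Gq q :=
  mul_mem (zpow_mem (tauP_mem q) b) (sigmaP_mem q)

lemma Tq_eq_TbP (q : ℕ) (b : ℤ) (z : RInf) : Tq q b z = TbP q b z := by
  cases z with
  | none =>
    show Tq q b (∞ : RInf) = TbP q b (∞ : RInf)
    rw [TbP_infty]
    rfl
  | some x =>
    by_cases hx : x = 0
    · subst hx
      show Tq q b ((0:ℝ) : RInf) = TbP q b ((0:ℝ) : RInf)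
      rw [TbP_zero]
      show (if (0:ℝ) = 0 then (∞ : RInf) else _) = (∞ : RInf)
      rw [if_pos rfl]
    · have h1 : Tq q b (Option.some x) = ((b * lamq q - x⁻¹ : ℝ) : RInf) := by
        show (if x = 0 then (∞ : RInf) else ((b * lamq q - x⁻¹ : ℝ) : RInf)) = _
        rw [if_neg hx]
      rw [h1, TbP]
      show _ = (tauP q ^ b) (sigmaP ((x : ℝ) : RInf))
      rw [sigmaP_some hx,
        tauP_zpow_some]
      congr 1
      ring

noncomputable def gpL (q : ℕ) (bs : List ℤ) : Equiv.Perm RInf :=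
  (bs.map (TbP q)).prod

lemma gpL_nil (q : ℕ) : gpL q [] = 1 := rfl

lemma gpL_cons (q : ℕ) (b : ℤ) (t : List ℤ) : gpL q (b :: t) = TbP q b * gpL q t := by
  simp [gpL]

lemma gpL_append (q : ℕ) (l1 l2 : List ℤ) : gpL q (l1 ++ l2) = gpL q l1 * gpL q l2 := by
  simp [gpL]

lemma gpL_mem (q : ℕ) (bs : List ℤ) : gpL q bs ∈ Gq q := by
  apply list_prod_mem
  intro x hx
  rw [List.mem_map] at hx
  obtain ⟨b, _, rfl⟩ := hx
  exact TbP_mem q b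

lemma rosen_eq_gpL (q : ℕ) (bs : List ℤ) : RosenValue q bs = gpL q bs (∞ : RInf) := by
  induction bs with
  | nil => rfl
  | cons b t ih =>
    show Tq q b (RosenValue q t) = _
    rw [ih, gpL_cons, Equiv.Perm.mul_apply, Tq_eq_TbP]

/-! ### Farey adjacency -/

lemma adj_map {q : ℕ} {g : Equiv.Perm RInf} (hg : g ∈ Gq q) {u v : RInf}
    (h : FareyAdj q u v) : FareyAdj q (g u) (g v) := by
  obtain ⟨hne, g', hg', hcase⟩ := h
  refine ⟨fun he => hne (g.injective he), g * g', mul_mem hg hg', ?_⟩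
  rcases hcase with ⟨h1, h2⟩ | ⟨h1, h2⟩
  · exact Or.inl ⟨by rw [Equiv.Perm.mul_apply, h1], by rw [Equiv.Perm.mul_apply, h2]⟩
  · exact Or.inr ⟨by rw [Equiv.Perm.mul_apply, h1], by rw [Equiv.Perm.mul_apply, h2]⟩

lemma adj_infty {q : ℕ} (hq : 3 ≤ q) {v : RInf} (h : FareyAdj q (∞ : RInf) v) :
    ∃ b : ℤ, v = ((b * lamq q : ℝ) : RInf) := by
  obtain ⟨hne, g, hg, hcase⟩ := h
  rcases hcase with ⟨h1, h2⟩ | ⟨h1, h2⟩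
  · obtain ⟨k, hk⟩ := stab_zero hq hg h1
    refine ⟨k, ?_⟩
    rw [← h2, hk, ← TbP, TbP_infty]
  · obtain ⟨k, hk⟩ := stab_infty hq hg h2
    refine ⟨k, ?_⟩
    rw [← h1, hk, tauP_zpow_some, zero_add]

lemma adj_infty' {q : ℕ} (hq : 3 ≤ q) (b : ℤ) :
    FareyAdj q (∞ : RInf) ((b * lamq q : ℝ) : RInf) := by
  refine ⟨Ne.symm (some_ne_infty _), TbP q b, TbP_mem q b,
    Or.inl ⟨TbP_zero q b, TbP_infty q b⟩⟩

lemma adj_step {q : ℕ} (hq : 3 ≤ q) {g : Equiv.Perm RInf} (hg : g ∈ Gq q) {w : RInf}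
    (h : FareyAdj q (g (∞ : RInf)) w) : ∃ b : ℤ, w = (g * TbP q b) (∞ : RInf) := by
  have h' := adj_map (inv_mem hg) h
  rw [show g⁻¹ (g (∞ : RInf)) = ∞ from g.symm_apply_apply _] at h'
  obtain ⟨b, hb⟩ := adj_infty hq h'
  refine ⟨b, ?_⟩
  rw [Equiv.Perm.mul_apply, TbP_infty, ← hb]
  exact (g.apply_symm_apply w).symm


/-! ### Assembly helpers -/

lemma take_succ_get {α : Type*} (l : List α) (m : ℕ) (h : m < l.length) :
    l.take (m+1) = l.take m ++ [l.get ⟨m, h⟩] := by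
  rw [List.take_succ]
  congr
  rw [List.getElem?_eq_getElem h]
  rfl

lemma rosen_snoc (q : ℕ) (bs : List ℤ) (b : ℤ) :
    RosenValue q (bs ++ [b]) = (gpL q bs * TbP q b) (∞ : RInf) := by
  rw [rosen_eq_gpL, gpL_append]
  have : gpL q [b] = TbP q b := by rw [gpL_cons, gpL_nil, mul_one]
  rw [this]

lemma get_cons_ofFn_succ {n : ℕ} (x : RInf) (v : Fin n → RInf) (j : ℕ) (hj : j < n)
    (h : j + 1 < (x :: List.ofFn v).length) :
    (x :: List.ofFn v).get ⟨j+1, h⟩ = v ⟨j, hj⟩ := by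
  show (List.ofFn v).get ⟨j, by simpa using h⟩ = v ⟨j, hj⟩
  rw [List.get_ofFn]
  congr 1

lemma chain'_cons_ofFn {n : ℕ} (hn : 1 ≤ n) (R : RInf → RInf → Prop) (x : RInf)
    (v : Fin n → RInf) :
    List.Chain' R (x :: List.ofFn v) ↔
      ((R x (v ⟨0, hn⟩)) ∧ ∀ (j : ℕ) (h : j + 1 < n), R (v ⟨j, by omega⟩) (v ⟨j+1, h⟩)) := by
  unfold List.Chain'
  rw [List.isChain_iff_getElem]
  change (∀ (i : ℕ) (h : i + 1 < (x :: List.ofFn v).length),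
    R ((x :: List.ofFn v).get ⟨i, by omega⟩) ((x :: List.ofFn v).get ⟨i + 1, h⟩)) ↔ _
  have hl : (x :: List.ofFn v).length = n + 1 := by simp
  constructor
  · intro H
    refine ⟨?_, ?_⟩
    · have h0 := H 0 (by rw [hl]; omega)
      rw [get_cons_ofFn_succ x v 0 hn] at h0
      exact h0
    · intro j hj
      have h1 := H (j+1) (by rw [hl]; omega)
      rw [get_cons_ofFn_succ x v (j+1) hj] at h1
      rw [get_cons_ofFn_succ x v j (by omega)] at h1
      exact h1
  · rintro ⟨H0, HS⟩ i hi
    rw [hl] at hi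
    have hi' : i < n := by omega
    cases i with
    | zero =>
      rw [get_cons_ofFn_succ x v 0 hi']
      exact H0
    | succ j =>
      rw [get_cons_ofFn_succ x v (j+1) hi', get_cons_ofFn_succ x v j (by omega)]
      exact HS j hi'

lemma uniq_prefix {q : ℕ} (hq : 3 ≤ q) {n : ℕ} (v : Fin n → RInf)
    (bs cs : List ℤ) (hb : bs.length = n) (hc : cs.length = n)
    (hvb : ∀ m : Fin n, RosenValue q (bs.take (m.val + 1)) = v m)
    (hvc : ∀ m : Fin n, RosenValue q (cs.take (m.val + 1)) = v m) :
    ∀ m : ℕ, m ≤ n → bs.take m = cs.take m := by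
  intro m
  induction m with
  | zero => intro _; simp
  | succ m ih =>
    intro hm
    have hpre := ih (by omega)
    have hmb : m < bs.length := by omega
    have hmc : m < cs.length := by omega
    have h1 := hvb ⟨m, by omega⟩
    have h2 := hvc ⟨m, by omega⟩
    rw [take_succ_get bs m hmb, rosen_snoc] at h1
    rw [take_succ_get cs m hmc, rosen_snoc] at h2
    rw [hpre] at h1
    have h3 : (gpL q (cs.take m) * TbP q (bs.get ⟨m, hmb⟩)) (∞ : RInf) =
        (gpL q (cs.take m) * TbP q (cs.get ⟨m, hmc⟩)) (∞ : RInf) := by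
      rw [h1, h2]
    rw [Equiv.Perm.mul_apply, Equiv.Perm.mul_apply, TbP_infty, TbP_infty] at h3
    have h4 := some_inj ((gpL q (cs.take m)).injective h3)
    have h5 : (bs.get ⟨m, hmb⟩ : ℝ) = (cs.get ⟨m, hmc⟩ : ℝ) :=
      mul_right_cancel₀ (lamq_ne hq) h4
    have h6 : bs.get ⟨m, hmb⟩ = cs.get ⟨m, hmc⟩ := by exact_mod_cast h5
    rw [take_succ_get bs m hmb, take_succ_get cs m hmc, hpre, h6]

/-- `v 0, …, v (n-1)` are the consecutive convergents of some Rosen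
continued fraction if and only if `⟨∞, v 0, …, v (n-1)⟩` is a path in `𝓕_q`;
moreover the coefficients are then uniquely determined. -/
theorem stmt3 (q : ℕ) (hq : 3 ≤ q) (n : ℕ) (hn : 1 ≤ n) (v : Fin n → RInf) :
    ((∃ bs : List ℤ, bs.length = n ∧
        ∀ m : Fin n, RosenValue q (bs.take (m.val + 1)) = v m) ↔
      List.Chain' (FareyAdj q) ((∞ : RInf) :: List.ofFn v)) ∧
    ∀ bs cs : List ℤ, bs.length = n → cs.length = n →
      (∀ m : Fin n, RosenValue q (bs.take (m.val + 1)) = v m) →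
      (∀ m : Fin n, RosenValue q (cs.take (m.val + 1)) = v m) → bs = cs := by
  constructor
  · rw [chain'_cons_ofFn hn]
    constructor
    · -- convergents → path
      rintro ⟨bs, hlen, hconv⟩
      constructor
      · -- FareyAdj ∞ (v 0)
        have h1 := hconv ⟨0, hn⟩
        have h0b : 0 < bs.length := by omega
        rw [take_succ_get bs 0 h0b] at h1
        simp only [List.take_zero, List.nil_append] at h1
        rw [show RosenValue q [bs.get ⟨0, h0b⟩] = (gpL q [] * TbP q (bs.get ⟨0, h0b⟩)) ∞ from
          rosen_snoc q [] _, gpL_nil, one_mul, TbP_infty] at h1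
        rw [← h1]
        exact adj_infty' hq _
      · intro j hj
        have hjb : j + 1 < bs.length := by omega
        have h1 := hconv ⟨j, by omega⟩
        have h2 := hconv ⟨j+1, hj⟩
        rw [take_succ_get bs (j+1) hjb, rosen_snoc] at h2
        set g2 := gpL q (bs.take (j+1)) * TbP q (bs.get ⟨j+1, hjb⟩) with hg2
        have hg2mem : g2 ∈ Gq q := mul_mem (gpL_mem q _) (TbP_mem q _)
        have hz : g2 ((0:ℝ) : RInf) = v ⟨j, by omega⟩ := by
          rw [hg2, Equiv.Perm.mul_apply, TbP_zero, ← rosen_eq_gpL]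
          exact h1
        have hinf : g2 (∞ : RInf) = v ⟨j+1, hj⟩ := h2
        refine ⟨?_, g2, hg2mem, Or.inl ⟨hz, hinf⟩⟩
        rw [← hz, ← hinf]
        intro hcon
        have := g2.injective hcon
        exact infty_ne_zero this.symm
    · -- path → convergents
      rintro ⟨hadj0, hadjS⟩
      have build : ∀ (m : ℕ) (_hm : m < n), ∃ bs : List ℤ, bs.length = m + 1 ∧
          ∀ (j : ℕ) (hj : j ≤ m), RosenValue q (bs.take (j+1)) = v ⟨j, by omega⟩ := by
        intro m
        induction m with
        | zero =>
          intro h0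
          obtain ⟨b, hb⟩ := adj_infty hq hadj0
          refine ⟨[b], rfl, ?_⟩
          intro j hj
          have hj0 : j = 0 := by omega
          subst hj0
          rw [show ([b] : List ℤ).take (0+1) = [b] from rfl]
          rw [show RosenValue q [b] = (gpL q [] * TbP q b) ∞ from rosen_snoc q [] b,
            gpL_nil, one_mul, TbP_infty, ← hb]
        | succ m ih =>
          intro hm
          obtain ⟨bs, hlen, hconv⟩ := ih (by omega)
          have htake : bs.take (m+1) = bs := by
            rw [← hlen]; exact List.take_length
          have hginf : gpL q bs (∞ : RInf) = v ⟨m, by omega⟩ := by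
            have h := hconv m le_rfl
            rw [htake, rosen_eq_gpL] at h
            exact h
          have hadj := hadjS m hm
          rw [← hginf] at hadj
          obtain ⟨b, hb⟩ := adj_step hq (gpL_mem q bs) hadj
          refine ⟨bs ++ [b], by simp [hlen], ?_⟩
          intro j hj
          rcases Nat.lt_or_ge j (m+1) with hjm | hjm
          · have h1 : (bs ++ [b]).take (j+1) = bs.take (j+1) := by
              apply List.take_append_of_le_length
              omega
            rw [h1]
            exact hconv j (by omega)
          · have hj1 : j = m + 1 := by omega
            subst hj1
            have h1 : (bs ++ [b]).take (m+1+1) = bs ++ [b] := by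
              have hh : (bs ++ [b]).length = m + 1 + 1 := by simp [hlen]
              rw [← hh]
              exact List.take_length
            rw [h1, rosen_snoc, ← hb]
      obtain ⟨bs, hlen, hconv⟩ := build (n-1) (by omega)
      refine ⟨bs, by omega, ?_⟩
      intro m
      have h := hconv m.val (by omega)
      exact h.trans (congrArg v (Fin.ext rfl))
  · -- uniqueness
    intro bs cs hb hc hvb hvc
    have h := uniq_prefix hq v bs cs hb hc hvb hvc n le_rfl
    rw [← List.take_length (l := bs), ← List.take_length (l := cs), hb, hc]
    exact h
end

section
/- Let q ≥ 3 be an integer and let x and y be distinct non-adjacent vertices of the Farey graph 𝓕_q. Then there is exactly one face P of 𝓕_q for which there exist g ∈ G_q and an integer i such that P = g(V_0), x = g(ρ^i(∞)), and y lies in the connected component of ℝ∞ \ {g(ρ^{i−1}(∞)), g(ρ^{i+1}(∞))} that does not contain x. -/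
open OnePoint

namespace Stmt7
open Real

noncomputable def sq (q : ℕ) (j : ℕ) : ℝ := Real.sin (j * (π / q)) / Real.sin (π / q)

lemma theta_pos {q : ℕ} (hq : 3 ≤ q) : 0 < π / q := by
  apply div_pos Real.pi_pos; exact_mod_cast Nat.lt_of_lt_of_le (by norm_num) hq

lemma sin_theta_pos {q : ℕ} (hq : 3 ≤ q) : 0 < Real.sin (π / q) := by
  apply Real.sin_pos_of_pos_of_lt_pi (theta_pos hq)
  have hq1 : (1:ℝ) < q := by exact_mod_cast Nat.lt_of_lt_of_le (by norm_num) hq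
  calc π / q < π / 1 := by
        apply div_lt_div_of_pos_left Real.pi_pos (by norm_num) hq1
    _ = π := by norm_num

lemma sq_zero (q : ℕ) : sq q 0 = 0 := by simp [sq]

lemma sq_one {q : ℕ} (hq : 3 ≤ q) : sq q 1 = 1 := by
  simp [sq, div_self (ne_of_gt (sin_theta_pos hq))]

lemma sq_rec {q : ℕ} (hq : 3 ≤ q) (j : ℕ) :
    sq q (j+2) = lamq q * sq q (j+1) - sq q j := by
  have hs := ne_of_gt (sin_theta_pos hq)
  set θ := π / q
  have key : Real.sin ((j+2) * θ) = 2 * Real.cos θ * Real.sin ((j+1)*θ) - Real.sin (j*θ) := by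
    have h1 : ((j:ℝ)+2) * θ = (j+1)*θ + θ := by ring
    have h2 : (j:ℝ) * θ = (j+1)*θ - θ := by ring
    rw [h1, h2, Real.sin_add, Real.sin_sub]; ring
  unfold sq lamq
  push_cast
  rw [key]
  simp only [θ]
  ring

lemma sq_two {q : ℕ} (hq : 3 ≤ q) : sq q 2 = lamq q := by
  have := sq_rec hq 0
  rw [sq_zero, sq_one hq] at this; simpa using this

lemma sq_pos {q : ℕ} (hq : 3 ≤ q) {j : ℕ} (h1 : 1 ≤ j) (h2 : j < q) : 0 < sq q j := by
  apply div_pos _ (sin_theta_pos hq)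
  apply Real.sin_pos_of_pos_of_lt_pi
  · apply mul_pos _ (theta_pos hq); exact_mod_cast h1
  · have hq0 : (0:ℝ) < q := by positivity
    have : (j:ℝ) < q := by exact_mod_cast h2
    calc (j:ℝ) * (π / q) < q * (π / q) := by
          apply mul_lt_mul_of_pos_right this (theta_pos hq)
      _ = π := by field_simp
/-- s_q = 0 -/
lemma sq_q {q : ℕ} (hq : 3 ≤ q) : sq q q = 0 := by
  have hq0 : (q:ℝ) ≠ 0 := by positivity
  have : (q:ℝ) * (π / q) = π := by field_simp
  simp [sq, this]

lemma sq_qsub1 {q : ℕ} (hq : 3 ≤ q) : sq q (q-1) = 1 := by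
  have hq0 : (q:ℝ) ≠ 0 := by positivity
  have hcast : ((q-1 : ℕ) : ℝ) = (q:ℝ) - 1 := by
    have : 1 ≤ q := by omega
    push_cast [this]; ring
  have harg : ((q-1:ℕ):ℝ) * (π / q) = π - π/q := by rw [hcast]; field_simp
  unfold sq
  rw [harg, Real.sin_pi_sub, div_self (ne_of_gt (sin_theta_pos hq))]

lemma sq_qadd1 {q : ℕ} (hq : 3 ≤ q) : sq q (q+1) = -1 := by
  have hq0 : (q:ℝ) ≠ 0 := by positivity
  have harg : ((q+1:ℕ):ℝ) * (π / q) = π + π/q := by push_cast; field_simp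
  unfold sq
  have hpa : Real.sin (π + π/q) = -Real.sin (π/q) := by rw [Real.sin_add]; simp
  rw [harg, hpa, div_eq_iff (ne_of_gt (sin_theta_pos hq))]; ring

/-- determinant identity: s_{j+1}^2 - s_{j+2} s_j = 1 -/
lemma sq_det {q : ℕ} (hq : 3 ≤ q) (j : ℕ) :
    sq q (j+1) ^ 2 - sq q (j+2) * sq q j = 1 := by
  have hs := sin_theta_pos hq
  set θ := π / q
  have key : Real.sin ((j+1)*θ)^2 - Real.sin ((j+2)*θ) * Real.sin (j*θ) = Real.sin θ ^ 2 := by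
    have h1 : Real.sin ((j+2)*θ) * Real.sin (j*θ)
        = (Real.cos (2*θ) - Real.cos ((2*j+2)*θ)) / 2 := by
      have := Real.cos_sub_cos (2*θ) ((2*(j:ℝ)+2)*θ)
      have e1 : (2*θ + (2*(j:ℝ)+2)*θ)/2 = ((j:ℝ)+2)*θ := by ring
      have e2 : (2*θ - (2*(j:ℝ)+2)*θ)/2 = -((j:ℝ)*θ) := by ring
      rw [e1, e2, Real.sin_neg] at this
      push_cast
      linarith [this]
    have h2 : Real.sin (((j:ℝ)+1)*θ)^2 = (1 - Real.cos ((2*(j:ℝ)+2)*θ)) / 2 := by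
      have hc := Real.cos_two_mul (((j:ℝ)+1)*θ)
      have hsc := Real.sin_sq_add_cos_sq (((j:ℝ)+1)*θ)
      have e1 : (2*(j:ℝ)+2)*θ = 2*(((j:ℝ)+1)*θ) := by ring
      rw [e1, hc]
      nlinarith [hsc]
    have h3 : Real.sin θ ^2 = (1 - Real.cos (2*θ))/2 := by
      have hc := Real.cos_two_mul θ
      have hsc := Real.sin_sq_add_cos_sq θ
      rw [hc]
      nlinarith [hsc]
    push_cast at h1 h2 ⊢
    rw [h2, h1, h3]
    ring
  have key2 : Real.sin ((↑j + 1) * π / ↑q) ^ 2 - Real.sin ((↑j + 2) * π / ↑q) * Real.sin ((↑j:ℝ) * π / ↑q)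
      = Real.sin (π/↑q)^2 := by
    rw [mul_div_assoc, mul_div_assoc, mul_div_assoc]; exact key
  have hs' : Real.sin (π/(q:ℝ)) ≠ 0 := ne_of_gt hs
  unfold sq
  push_cast
  field_simp
  ring_nf at key2 ⊢
  nlinarith [key2, hs]

lemma lam_pos {q : ℕ} (hq : 3 ≤ q) : 0 < lamq q := by
  unfold lamq
  have h1 : π / q ≤ π / 3 := by
    apply div_le_div_of_nonneg_left Real.pi_pos.le (by norm_num)
    exact_mod_cast hq
  have h2 : π / 3 < π / 2 := by
    apply div_lt_div_of_pos_left Real.pi_pos (by norm_num) (by norm_num)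
  have := Real.cos_pos_of_mem_Ioo (x := π / q) ⟨by linarith [theta_pos hq, Real.pi_pos], by linarith⟩
  linarith

end Stmt7

namespace Stmt7
open Real

/-- Möbius transformation as a function on `RInf`. -/
noncomputable def mob (a b c d : ℝ) : RInf → RInf := fun z =>
  match z with
  | Option.none => if c = 0 then (∞ : RInf) else ((a / c : ℝ) : RInf)
  | Option.some x => if c * x + d = 0 then (∞ : RInf) else (((a * x + b) / (c * x + d) : ℝ) : RInf)

lemma mob_infty (a b c d : ℝ) :
    mob a b c d ∞ = if c = 0 then (∞ : RInf) else ((a / c : ℝ) : RInf) := rfl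

lemma mob_coe (a b c d x : ℝ) :
    mob a b c d ((x : ℝ) : RInf)
      = if c * x + d = 0 then (∞ : RInf) else (((a * x + b) / (c * x + d) : ℝ) : RInf) := rfl

lemma sigmaP_coe (x : ℝ) :
    sigmaP ((x : ℝ) : RInf) = if x = 0 then (∞ : RInf) else ((-x⁻¹ : ℝ) : RInf) := rfl

lemma sigmaP_infty : sigmaP ∞ = ((0:ℝ) : RInf) := rfl

lemma tauP_coe (q : ℕ) (x : ℝ) : tauP q ((x : ℝ) : RInf) = ((x + lamq q : ℝ) : RInf) := rfl

lemma tauP_infty (q : ℕ) : tauP q ∞ = ∞ := rfl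

lemma rhoP_coe (q : ℕ) (x : ℝ) :
    rhoP q ((x : ℝ) : RInf)
      = if x = 0 then (∞ : RInf) else ((lamq q - x⁻¹ : ℝ) : RInf) := by
  show tauP q (sigmaP _) = _
  rw [sigmaP_coe]
  by_cases h : x = 0
  · simp [h, tauP_infty]
  · simp only [h, if_false, tauP_coe]
    norm_num [sub_eq_neg_add]

lemma rhoP_infty (q : ℕ) : rhoP q ∞ = ((lamq q : ℝ) : RInf) := by
  show tauP q (sigmaP ∞) = _
  rw [sigmaP_infty, tauP_coe]
  norm_num

/-- composing `rhoP` with a Möbius map. -/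
lemma rho_mob (q : ℕ) (a b c d : ℝ) (hdet : a * d - b * c = 1) (z : RInf) :
    rhoP q (mob a b c d z) = mob (lamq q * a - c) (lamq q * b - d) a b z := by
  cases z with
  | none =>
    show rhoP q (mob a b c d ∞) = mob (lamq q * a - c) (lamq q * b - d) a b ∞
    rw [mob_infty, mob_infty]
    by_cases hc : c = 0
    · have ha : a ≠ 0 := by intro h; rw [h, hc] at hdet; simp at hdet
      simp only [hc, if_true, ha, if_false, rhoP_infty]
      congr 1
      field_simp
      ring
    · simp only [hc, if_false]
      rw [rhoP_coe]
      by_cases ha : a = 0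
      · simp [ha, div_eq_zero_iff, hc]
      · have : a / c ≠ 0 := div_ne_zero ha hc
        simp only [this, if_false, ha, if_false]
        congr 1
        field_simp
  | some x =>
    show rhoP q (mob a b c d ((x:ℝ):RInf)) = mob (lamq q * a - c) (lamq q * b - d) a b ((x:ℝ):RInf)
    rw [mob_coe, mob_coe]
    by_cases hden : c * x + d = 0
    · have hnum : a * x + b ≠ 0 := by
        intro h
        have hd2 : (c*x+d)*a - (a*x+b)*c = 1 := by linear_combination hdet
        rw [h, hden] at hd2; simp at hd2
      simp only [hden, if_true, hnum, if_false, rhoP_infty]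
      congr 1
      have : (lamq q * a - c) * x + (lamq q * b - d) = lamq q * (a*x+b) - (c*x+d) := by ring
      rw [this, hden]
      field_simp
      ring
    · simp only [hden, if_false]
      rw [rhoP_coe]
      by_cases hnum : a * x + b = 0
      · have h0 : (a*x+b)/(c*x+d) = 0 := by simp [hnum]
        simp only [h0, if_true, hnum]
        simp
      · have hv : (a*x+b)/(c*x+d) ≠ 0 := div_ne_zero hnum hden
        simp only [hv, if_false, hnum, if_false]
        congr 1
        have e1 : (lamq q * a - c) * x + (lamq q * b - d) = lamq q * (a*x+b) - (c*x+d) := by ring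
        rw [e1]
        field_simp

/-- `ρ^n` as a Möbius map, for `n ≥ 1`. -/
lemma rho_pow_mob (q : ℕ) (hq : 3 ≤ q) : ∀ n : ℕ, 1 ≤ n → ∀ z : RInf,
    (rhoP q ^ n) z = mob (sq q (n+1)) (-sq q n) (sq q n) (-sq q (n-1)) z := by
  intro n
  induction n with
  | zero => omega
  | succ m ih =>
    intro _ z
    by_cases hm : 1 ≤ m
    · have hdet : sq q (m+1) * (-sq q (m-1)) - (-sq q m) * sq q m = 1 := by
        have := sq_det hq (m-1)
        have e : m - 1 + 1 = m := by omega
        have e2 : m - 1 + 2 = m + 1 := by omega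
        rw [e, e2] at this
        nlinarith [this]
      have : (rhoP q ^ (m+1)) z = rhoP q ((rhoP q ^ m) z) := by
        rw [pow_succ']; rfl
      rw [this, ih hm z, rho_mob q _ _ _ _ hdet]
      have e3 : lamq q * sq q (m+1) - sq q m = sq q (m+2) := by rw [sq_rec hq m]
      have e4 : lamq q * (-sq q m) - (-sq q (m-1)) = -sq q (m+1) := by
        have e : m - 1 + 1 = m := by omega
        have e2 : m - 1 + 2 = m + 1 := by omega
        have := sq_rec hq (m-1)
        rw [e, e2] at this
        rw [this]; ring
      rw [e3, e4]
      norm_num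
    · have hm0 : m = 0 := by omega
      subst hm0
      rw [pow_one]
      rw [(by norm_num : 0 + 1 + 1 = 2), sq_two hq, sq_one hq, sq_zero]
      cases z with
      | none =>
        show rhoP q ∞ = mob (lamq q) (-1) 1 (-0) ∞
        rw [rhoP_infty, mob_infty]
        norm_num
      | some x =>
        show rhoP q ((x:ℝ):RInf) = mob (lamq q) (-1) 1 (-0) ((x:ℝ):RInf)
        rw [rhoP_coe, mob_coe]
        by_cases hx : x = 0
        · simp [hx]
        · have : (1:ℝ) * x + -0 ≠ 0 := by simpa using hx
          simp only [hx, if_false, this, if_false]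
          congr 1
          rw [eq_div_iff this]
          simp only [one_mul, neg_zero, add_zero, sub_mul, inv_mul_cancel₀ hx]
          ring

lemma rho_pow_q (q : ℕ) (hq : 3 ≤ q) : rhoP q ^ q = 1 := by
  ext z
  rw [rho_pow_mob q hq q (by omega) z, sq_q hq, sq_qadd1 hq, sq_qsub1 hq]
  cases z with
  | none =>
    show mob (-1) (-0) 0 (-1) ∞ = _
    rw [mob_infty]; norm_num; rfl
  | some x =>
    show mob (-1) (-0) 0 (-1) ((x:ℝ):RInf) = _
    rw [mob_coe]
    have : (0:ℝ) * x + -1 ≠ 0 := by norm_num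
    simp only [this, if_false]
    norm_num
    rfl

end Stmt7

namespace Stmt7
open Real

lemma sq_nonneg' {q : ℕ} (hq : 3 ≤ q) {j : ℕ} (h2 : j ≤ q) : 0 ≤ sq q j := by
  rcases Nat.eq_zero_or_pos j with h | h
  · subst h; rw [sq_zero]
  · rcases eq_or_lt_of_le h2 with h' | h'
    · subst h'; rw [sq_q hq]
    · exact le_of_lt (sq_pos hq h h')

lemma rho_pow_infty_val {q : ℕ} (hq : 3 ≤ q) {n : ℕ} (h1 : 1 ≤ n) (hn : n < q) :
    (rhoP q ^ n) ∞ = ((sq q (n+1) / sq q n : ℝ) : RInf) := by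
  rw [rho_pow_mob q hq n h1 ∞, mob_infty]
  simp [ne_of_gt (sq_pos hq h1 hn)]

lemma rho_pow_infty_pos {q : ℕ} (hq : 3 ≤ q) {n : ℕ} (h1 : 1 ≤ n) (hn : n + 1 < q) :
    0 < sq q (n+1) / sq q n :=
  div_pos (sq_pos hq (by omega) hn) (sq_pos hq h1 (by omega))

lemma rho_pow_qsub1_infty {q : ℕ} (hq : 3 ≤ q) : (rhoP q ^ (q-1)) ∞ = ((0:ℝ) : RInf) := by
  rw [rho_pow_infty_val hq (by omega) (by omega)]
  have : q - 1 + 1 = q := by omega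
  rw [this, sq_q hq]
  norm_num

lemma rho_zero (q : ℕ) : rhoP q (((0:ℝ)) : RInf) = ∞ := by
  rw [rhoP_coe]; simp

lemma rho_pow_zero_val {q : ℕ} (hq : 3 ≤ q) {n : ℕ} (h1 : 2 ≤ n) (hn : n < q) :
    (rhoP q ^ n) (((0:ℝ)):RInf) = ((sq q n / sq q (n-1) : ℝ) : RInf) := by
  rw [rho_pow_mob q hq n (by omega) _, mob_coe]
  have hd : sq q n * 0 + -sq q (n-1) ≠ 0 := by
    simp [ne_of_gt (sq_pos hq (show 1 ≤ n-1 by omega) (show n-1 < q by omega))]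
  simp only [hd, if_false]
  congr 1
  have h0 : sq q (n-1) ≠ 0 := ne_of_gt (sq_pos hq (by omega) (by omega))
  simp only [mul_zero, zero_add, neg_div_neg_eq]

lemma rho_pow_zero_pos {q : ℕ} (hq : 3 ≤ q) {n : ℕ} (h1 : 2 ≤ n) (hn : n < q) :
    0 < sq q n / sq q (n-1) :=
  div_pos (sq_pos hq (by omega) hn) (sq_pos hq (by omega) (by omega))

/-- ρ^n maps negative reals to positive reals, for 1 ≤ n ≤ q-1. -/
lemma rho_pow_neg_to_pos {q : ℕ} (hq : 3 ≤ q) {n : ℕ} (h1 : 1 ≤ n) (hn : n < q)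
    {x : ℝ} (hx : x < 0) : ∃ p : ℝ, 0 < p ∧ (rhoP q ^ n) ((x : ℝ) : RInf) = ((p : ℝ) : RInf) := by
  rw [rho_pow_mob q hq n h1 _, mob_coe]
  have hden : sq q n * x + -sq q (n-1) < 0 := by
    have h1' : 0 < sq q n := sq_pos hq h1 hn
    have h2' : 0 ≤ sq q (n-1) := sq_nonneg' hq (by omega)
    nlinarith
  have hnum : sq q (n+1) * x + -sq q n < 0 := by
    have h1' : 0 < sq q n := sq_pos hq h1 hn
    have h2' : 0 ≤ sq q (n+1) := sq_nonneg' hq (by omega)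
    nlinarith
  refine ⟨(sq q (n+1) * x + -sq q n) / (sq q n * x + -sq q (n-1)), ?_, ?_⟩
  · exact div_pos_of_neg_of_neg hnum hden
  · simp [ne_of_lt hden]

lemma sigmaP_coe_ne {x : ℝ} (hx : x ≠ 0) :
    sigmaP ((x:ℝ) : RInf) = ((-x⁻¹ : ℝ) : RInf) := by
  rw [sigmaP_coe]; simp [hx]

lemma tau_pow_coe (q : ℕ) (n : ℕ) : ∀ x : ℝ,
    (tauP q ^ n) ((x:ℝ):RInf) = ((x + n * lamq q : ℝ) : RInf) := by
  induction n with
  | zero => intro x; simp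
  | succ k ih =>
    intro x
    rw [pow_succ]
    show (tauP q ^ k) (tauP q ((x:ℝ):RInf)) = _
    rw [tauP_coe, ih (x + lamq q)]
    push_cast
    congr 1
    ring

lemma tau_pow_infty (q : ℕ) (n : ℕ) : (tauP q ^ n) ∞ = ∞ := by
  induction n with
  | zero => simp
  | succ k ih =>
    rw [pow_succ]
    show (tauP q ^ k) (tauP q ∞) = _
    rw [tauP_infty, ih]

lemma tau_zpow_coe (q : ℕ) (n : ℤ) (x : ℝ) :
    (tauP q ^ n) ((x:ℝ):RInf) = ((x + n * lamq q : ℝ) : RInf) := by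
  cases n with
  | ofNat m =>
    rw [Int.ofNat_eq_natCast, zpow_natCast, tau_pow_coe]
    push_cast
    norm_num
  | negSucc m =>
    rw [zpow_negSucc, Equiv.Perm.inv_def, Equiv.symm_apply_eq]
    rw [tau_pow_coe]
    congr 1
    push_cast [Int.negSucc_eq]
    ring

lemma tau_zpow_infty (q : ℕ) (n : ℤ) : (tauP q ^ n) ∞ = ∞ := by
  cases n with
  | ofNat m => rw [Int.ofNat_eq_natCast, zpow_natCast, tau_pow_infty]
  | negSucc m =>
    rw [zpow_negSucc, Equiv.Perm.inv_def, Equiv.symm_apply_eq, tau_pow_infty]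

end Stmt7

namespace Stmt7
open Real

lemma sigmaP_mem (q : ℕ) : sigmaP ∈ Gq q := Subgroup.subset_closure (by simp)
lemma tauP_mem (q : ℕ) : tauP q ∈ Gq q := Subgroup.subset_closure (by simp)
lemma rhoP_mem (q : ℕ) : rhoP q ∈ Gq q := mul_mem (tauP_mem q) (sigmaP_mem q)

lemma sigmaP_sq : sigmaP * sigmaP = 1 := by
  ext z
  exact sigmaFun_invol z

lemma rho_mul_sigma (q : ℕ) : rhoP q * sigmaP = tauP q := by
  rw [rhoP, mul_assoc, sigmaP_sq, mul_one]

lemma rho_inv_eq (q : ℕ) (hq : 3 ≤ q) : (rhoP q)⁻¹ = rhoP q ^ (q-1) := by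
  have h : rhoP q * rhoP q ^ (q-1) = 1 := by
    rw [← pow_succ']
    have : q - 1 + 1 = q := by omega
    rw [this, rho_pow_q q hq]
  exact (eq_inv_of_mul_eq_one_right h).symm ▸ (inv_eq_of_mul_eq_one_right h).symm

lemma sigma_mul_rho_pow (q : ℕ) (hq : 3 ≤ q) : sigmaP * rhoP q ^ (q-1) = (tauP q)⁻¹ := by
  have hs : sigmaP⁻¹ = sigmaP := inv_eq_of_mul_eq_one_right sigmaP_sq
  rw [← rho_inv_eq q hq, ← rho_mul_sigma q, mul_inv_rev, hs]

lemma rho_pow_mod' (q : ℕ) (hq : 3 ≤ q) (m : ℕ) : rhoP q ^ m = rhoP q ^ (m % q) := by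
  conv_lhs => rw [← Nat.div_add_mod m q]
  rw [pow_add, pow_mul, rho_pow_q q hq, one_pow, one_mul]

lemma rho_zpow_q (q : ℕ) (hq : 3 ≤ q) : rhoP q ^ (q:ℤ) = 1 := by
  rw [zpow_natCast, rho_pow_q q hq]

lemma rho_zpow_mod (q : ℕ) (hq : 3 ≤ q) (i : ℤ) :
    rhoP q ^ i = rhoP q ^ ((i % q).toNat) := by
  have hq0 : (q:ℤ) ≠ 0 := by exact_mod_cast (by omega : q ≠ 0)
  conv_lhs => rw [← Int.mul_ediv_add_emod i q]
  rw [zpow_add, zpow_mul, rho_zpow_q q hq, one_zpow, one_mul,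
    ← zpow_natCast, Int.toNat_of_nonneg (Int.emod_nonneg i hq0)]

lemma mem_V0_rho_zpow (q : ℕ) (hq : 3 ≤ q) (m : ℤ) : (rhoP q ^ m) ∞ ∈ V0 q := by
  rw [rho_zpow_mod q hq m]
  refine ⟨(m % q).toNat, ?_, rfl⟩
  have h1 : m % q < q := Int.emod_lt_of_pos m (by exact_mod_cast (by omega : 0 < q))
  omega

lemma rho_zpow_image_V0 (q : ℕ) (hq : 3 ≤ q) (k : ℤ) :
    ⇑(rhoP q ^ k) '' V0 q = V0 q := by
  ext v
  constructor
  · rintro ⟨w, ⟨i, hi, rfl⟩, rfl⟩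
    have h : (rhoP q ^ k) ((rhoP q ^ i) ∞) = (rhoP q ^ (k + (i:ℤ))) ∞ := by
      rw [zpow_add, zpow_natCast]
      rfl
    rw [h]
    exact mem_V0_rho_zpow q hq _
  · rintro ⟨i, hi, rfl⟩
    refine ⟨(rhoP q ^ ((i:ℤ) - k)) ∞, mem_V0_rho_zpow q hq _, ?_⟩
    have : (rhoP q ^ k) ((rhoP q ^ ((i:ℤ) - k)) ∞) = (rhoP q ^ (k + ((i:ℤ) - k))) ∞ := by
      rw [zpow_add]
      rfl
    rw [this]
    have e : k + ((i:ℤ) - k) = (i:ℤ) := by ring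
    rw [e, zpow_natCast]

end Stmt7

namespace Stmt7
open Real

abbrev Letter := ℕ ⊕ Unit

noncomputable def evalL (q : ℕ) : Letter → Equiv.Perm RInf
  | Sum.inl a => rhoP q ^ a
  | Sum.inr _ => sigmaP

def okL (q : ℕ) : Letter → Prop
  | Sum.inl a => 1 ≤ a ∧ a ≤ q - 1
  | Sum.inr _ => True

def altR : Letter → Letter → Prop := fun x y => x.isLeft ≠ y.isLeft

def Red (q : ℕ) (l : List Letter) : Prop :=
  (∀ w ∈ l, okL q w) ∧ l.Chain' altR

noncomputable def evalW (q : ℕ) (l : List Letter) : Equiv.Perm RInf :=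
  (l.map (evalL q)).prod

lemma evalW_nil (q : ℕ) : evalW q [] = 1 := rfl

lemma evalW_append (q : ℕ) (l1 l2 : List Letter) :
    evalW q (l1 ++ l2) = evalW q l1 * evalW q l2 := by
  simp [evalW, List.map_append, List.prod_append]

lemma evalW_singleton (q : ℕ) (x : Letter) : evalW q [x] = evalL q x := by
  simp [evalW]

lemma evalW_cons_apply (q : ℕ) (x : Letter) (t : List Letter) (z : RInf) :
    evalW q (x :: t) z = evalL q x (evalW q t z) := by
  have : evalW q (x :: t) = evalL q x * evalW q t := by
    simp [evalW]
  rw [this]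
  rfl

lemma evalW_concat_apply (q : ℕ) (t : List Letter) (x : Letter) (z : RInf) :
    evalW q (t ++ [x]) z = evalW q t (evalL q x z) := by
  rw [evalW_append, evalW_singleton]
  rfl

lemma Red.tail' {q x t} (h : Red q (x :: t)) : Red q t :=
  ⟨fun w hw => h.1 w (by simp [hw]), (List.isChain_cons.mp h.2).2⟩

lemma Red.dropLast' {q x t} (h : Red q (t ++ [x])) : Red q t :=
  ⟨fun w hw => h.1 w (by simp [hw]), (List.isChain_append.mp h.2).1⟩

lemma Red.last_alt {q x t} (h : Red q (t ++ [x])) : ∀ y ∈ t.getLast?, altR y x := by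
  intro y hy
  exact (List.isChain_append.mp h.2).2.2 y hy x (by simp)

def IsPosR (z : RInf) : Prop := ∃ p : ℝ, 0 < p ∧ z = ((p:ℝ) : RInf)
def IsNegR (z : RInf) : Prop := ∃ p : ℝ, p < 0 ∧ z = ((p:ℝ) : RInf)

lemma IsPosR.ne_infty {z} (h : IsPosR z) : z ≠ ∞ := by
  obtain ⟨p, _, rfl⟩ := h; exact OnePoint.coe_ne_infty p

lemma IsNegR.ne_infty {z} (h : IsNegR z) : z ≠ ∞ := by
  obtain ⟨p, _, rfl⟩ := h; exact OnePoint.coe_ne_infty p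

lemma rho_pow_negR {q : ℕ} (hq : 3 ≤ q) {a : ℕ} (ha1 : 1 ≤ a) (ha2 : a ≤ q - 1)
    {v : RInf} (hv : IsNegR v) : IsPosR ((rhoP q ^ a) v) := by
  obtain ⟨p, hp, rfl⟩ := hv
  obtain ⟨p', hp', h⟩ := rho_pow_neg_to_pos hq ha1 (by omega) hp
  exact ⟨p', hp', by rw [h]⟩

lemma sigma_posR {v : RInf} (hv : IsPosR v) : IsNegR (sigmaP v) := by
  obtain ⟨p, hp, rfl⟩ := hv
  rw [sigmaP_coe_ne (ne_of_gt hp)]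
  exact ⟨-p⁻¹, by simp [inv_pos.2 hp], rfl⟩

lemma sigma_negR {v : RInf} (hv : IsNegR v) : IsPosR (sigmaP v) := by
  obtain ⟨p, hp, rfl⟩ := hv
  rw [sigmaP_coe_ne (ne_of_lt hp)]
  refine ⟨-p⁻¹, ?_, rfl⟩
  have : p⁻¹ < 0 := inv_neg''.mpr hp
  linarith

def startOK (l : List Letter) (v : RInf) : Prop :=
  match l.getLast? with
  | Option.some (Sum.inl _) => IsNegR v
  | Option.some (Sum.inr _) => IsPosR v
  | none => False

def endSt (l : List Letter) (z : RInf) : Prop :=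
  match l.head? with
  | Option.some (Sum.inl _) => IsPosR z
  | Option.some (Sum.inr _) => IsNegR z
  | none => False

lemma endSt_ne_infty {l z} (h : endSt l z) : z ≠ ∞ := by
  unfold endSt at h
  match hl : l.head? with
  | Option.some (Sum.inl a) => rw [hl] at h; exact h.ne_infty
  | Option.some (Sum.inr u) => rw [hl] at h; exact h.ne_infty
  | Option.none => rw [hl] at h; exact absurd h not_false

lemma evalW_sign {q : ℕ} (hq : 3 ≤ q) :
    ∀ l, Red q l → ∀ v, startOK l v → endSt l (evalW q l v) := by
  intro l
  induction l with
  | nil =>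
    intro _ v hv
    exact absurd hv (by simp [startOK])
  | cons x t ih =>
    intro hred v hv
    have hokx : okL q x := hred.1 x (by simp)
    rw [evalW_cons_apply]
    cases t with
    | nil =>
      cases x with
      | inl a =>
        have hvn : IsNegR v := hv
        have : IsPosR ((rhoP q ^ a) v) := rho_pow_negR hq hokx.1 hokx.2 hvn
        simpa [endSt, evalL, evalW_nil] using this
      | inr u =>
        have hvp : IsPosR v := hv
        have : IsNegR (sigmaP v) := sigma_posR hvp
        simpa [endSt, evalL, evalW_nil] using this
    | cons y t' =>
      have halt : altR x y := (List.isChain_cons_cons.mp hred.2).1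
      have hred' : Red q (y :: t') := hred.tail'
      have hv' : startOK (y :: t') v := by
        unfold startOK at hv ⊢
        rwa [List.getLast?_cons_cons] at hv
      have hend := ih hred' v hv'
      cases x with
      | inl a =>
        cases y with
        | inl b => exact absurd rfl halt
        | inr u =>
          have hp : IsNegR (evalW q (Sum.inr u :: t') v) := hend
          have : IsPosR ((rhoP q ^ a) (evalW q (Sum.inr u :: t') v)) :=
            rho_pow_negR hq hokx.1 hokx.2 hp
          exact this
      | inr u =>
        cases y with
        | inr u' => exact absurd rfl halt
        | inl b =>
          have hp : IsPosR (evalW q (Sum.inl b :: t') v) := hend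
          exact sigma_posR hp

end Stmt7

namespace Stmt7
open Real

lemma tauP_inv_infty (q : ℕ) : (tauP q)⁻¹ ∞ = ∞ := by
  have h := tau_zpow_infty q (-1)
  rwa [zpow_neg, zpow_one] at h

lemma startOK_concat_r {t' : List Letter} {u : Unit} {v : RInf} (hv : IsPosR v) :
    startOK (t' ++ [Sum.inr u]) v := by
  unfold startOK
  rw [List.getLast?_concat]
  exact hv

/-- Key stabilizer lemma, by strong induction on word length. -/
lemma eq_nil_or_append' {α : Type*} (l : List α) : l = [] ∨ ∃ t x, l = t ++ [x] := by
  rcases List.eq_nil_or_concat l with h | ⟨t, x, h⟩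
  · exact Or.inl h
  · exact Or.inr ⟨t, x, by rw [h, List.concat_eq_append]⟩

lemma evalW_infty_eq (q : ℕ) (hq : 3 ≤ q) :
    ∀ N l, l.length ≤ N → Red q l → evalW q l ∞ = ∞ → ∃ n : ℤ, evalW q l = tauP q ^ n := by
  intro N
  induction N with
  | zero =>
    intro l hl _ _
    have : l = [] := List.length_eq_zero_iff.mp (by omega)
    subst this
    exact ⟨0, by simp [evalW_nil]⟩
  | succ N ih =>
    intro l hl hred hfix
    rcases eq_nil_or_append' l with rfl | ⟨t, x, rfl⟩
    · exact ⟨0, by simp [evalW_nil]⟩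
    have hredt : Red q t := hred.dropLast'
    have hokx : okL q x := hred.1 x (by simp)
    rw [evalW_concat_apply] at hfix
    cases x with
    | inl a =>
      obtain ⟨ha1, ha2⟩ := hokx
      by_cases haq : a = q - 1
      · -- ρ^a ∞ = 0
        have h0 : evalL q (Sum.inl a) ∞ = ((0:ℝ) : RInf) := by
          show (rhoP q ^ a) ∞ = _
          rw [haq]; exact rho_pow_qsub1_infty hq
        rw [h0] at hfix
        rcases eq_nil_or_append' t with rfl | ⟨t', y, rfl⟩
        · exact absurd hfix (OnePoint.coe_ne_infty 0)
        cases y with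
        | inl b =>
          exfalso
          have := hred.last_alt (Sum.inl b) (by rw [List.getLast?_concat]; rfl)
          exact this rfl
        | inr u =>
          rw [evalW_concat_apply] at hfix
          have hσ0 : evalL q (Sum.inr u) (((0:ℝ)) : RInf) = ∞ := by
            show sigmaP _ = _
            rw [sigmaP_coe]; simp
          rw [hσ0] at hfix
          have hredt' : Red q t' := hredt.dropLast'
          have hlen : t'.length ≤ N := by
            have h' := hl
            simp [List.length_append] at h'
            omega
          obtain ⟨n, hn⟩ := ih t' hlen hredt' hfix
          refine ⟨n - 1, ?_⟩
          rw [evalW_append, evalW_append, mul_assoc, evalW_singleton, evalW_singleton]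
          have : evalL q (Sum.inr u) * evalL q (Sum.inl a) = (tauP q)⁻¹ := by
            show sigmaP * rhoP q ^ a = _
            rw [haq]; exact sigma_mul_rho_pow q hq
          rw [this, hn, ← zpow_sub_one]
      · -- 1 ≤ a ≤ q-2 : ρ^a ∞ is positive
        exfalso
        have hpos : IsPosR (evalL q (Sum.inl a) ∞) := by
          refine ⟨sq q (a+1) / sq q a, rho_pow_infty_pos hq ha1 (by omega), ?_⟩
          show (rhoP q ^ a) ∞ = _
          exact rho_pow_infty_val hq ha1 (by omega)
        rcases eq_nil_or_append' t with rfl | ⟨t', y, rfl⟩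
        · rw [show evalW q [] = 1 from rfl] at hfix
          exact hpos.ne_infty hfix
        cases y with
        | inl b =>
          have := hred.last_alt (Sum.inl b) (by rw [List.getLast?_concat]; rfl)
          exact this rfl
        | inr u =>
          have hst : startOK (t' ++ [Sum.inr u]) (evalL q (Sum.inl a) ∞) :=
            startOK_concat_r hpos
          have := evalW_sign hq _ hredt _ hst
          exact endSt_ne_infty this hfix
    | inr u =>
      have hσ : evalL q (Sum.inr u) ∞ = ((0:ℝ) : RInf) := by
        show sigmaP ∞ = _
        exact sigmaP_infty
      rw [hσ] at hfix
      rcases eq_nil_or_append' t with rfl | ⟨t', y, rfl⟩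
      · exact absurd hfix (OnePoint.coe_ne_infty 0)
      cases y with
      | inr u' =>
        exfalso
        have := hred.last_alt (Sum.inr u') (by rw [List.getLast?_concat]; rfl)
        exact this rfl
      | inl a =>
        have hoky : okL q (Sum.inl a) := hred.1 _ (by simp)
        obtain ⟨ha1, ha2⟩ := hoky
        rw [evalW_concat_apply] at hfix
        by_cases ha1' : a = 1
        · -- ρ(0) = ∞
          have h1 : evalL q (Sum.inl a) (((0:ℝ)):RInf) = ∞ := by
            show (rhoP q ^ a) _ = _
            rw [ha1', pow_one]
            exact rho_zero q
          rw [h1] at hfix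
          have hredt' : Red q t' := hredt.dropLast'
          have hlen : t'.length ≤ N := by
            have h' := hl
            simp [List.length_append] at h'
            omega
          obtain ⟨n, hn⟩ := ih t' hlen hredt' hfix
          refine ⟨n + 1, ?_⟩
          rw [evalW_append, evalW_append, mul_assoc, evalW_singleton, evalW_singleton]
          have : evalL q (Sum.inl a) * evalL q (Sum.inr u) = tauP q := by
            show rhoP q ^ a * sigmaP = _
            rw [ha1', pow_one]
            exact rho_mul_sigma q
          rw [this, hn, ← zpow_add_one]
        · -- 2 ≤ a : ρ^a (0) positive
          exfalso
          have hpos : IsPosR (evalL q (Sum.inl a) (((0:ℝ)):RInf)) := by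
            refine ⟨sq q a / sq q (a-1), rho_pow_zero_pos hq (by omega) (by omega), ?_⟩
            show (rhoP q ^ a) _ = _
            exact rho_pow_zero_val hq (by omega) (by omega)
          rcases eq_nil_or_append' t' with rfl | ⟨t'', y', rfl⟩
          · exact hpos.ne_infty (by simpa [evalW_nil] using hfix)
          cases y' with
          | inl b =>
            have := hredt.last_alt (Sum.inl b) (by rw [List.getLast?_concat]; rfl)
            exact this rfl
          | inr u' =>
            have hst : startOK (t'' ++ [Sum.inr u']) (evalL q (Sum.inl a) (((0:ℝ)):RInf)) :=
              startOK_concat_r hpos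
            have := evalW_sign hq _ hredt.dropLast' _ hst
            exact endSt_ne_infty this hfix

end Stmt7

namespace Stmt7
open Real

lemma evalW_cons (q : ℕ) (x : Letter) (t : List Letter) :
    evalW q (x :: t) = evalL q x * evalW q t := by
  simp [evalW]

lemma repr_cons (q : ℕ) (hq : 3 ≤ q) (x : Letter) (hx : okL q x) :
    ∀ l, Red q l → ∃ l', Red q l' ∧ evalW q l' = evalL q x * evalW q l := by
  intro l hl
  cases l with
  | nil =>
    exact ⟨[x], ⟨by simpa using hx, List.isChain_singleton x⟩,
      by rw [evalW_singleton, evalW_nil, mul_one]⟩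
  | cons y t =>
    have hy : okL q y := hl.1 y (by simp)
    cases x with
    | inr u =>
      cases y with
      | inr u' =>
        refine ⟨t, hl.tail', ?_⟩
        rw [evalW_cons, ← mul_assoc]
        have : evalL q (Sum.inr u) * evalL q (Sum.inr u') = 1 := sigmaP_sq
        rw [this, one_mul]
      | inl b =>
        refine ⟨Sum.inr u :: Sum.inl b :: t, ⟨?_, ?_⟩, rfl⟩
        · intro w hw
          rcases List.mem_cons.mp hw with rfl | hw
          · trivial
          · exact hl.1 w hw
        · show List.IsChain altR _
          rw [List.isChain_cons_cons]
          exact ⟨by simp [altR], hl.2⟩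
    | inl a =>
      cases y with
      | inr u =>
        refine ⟨Sum.inl a :: Sum.inr u :: t, ⟨?_, ?_⟩, rfl⟩
        · intro w hw
          rcases List.mem_cons.mp hw with rfl | hw
          · exact hx
          · exact hl.1 w hw
        · show List.IsChain altR _
          rw [List.isChain_cons_cons]
          exact ⟨by simp [altR], hl.2⟩
      | inl b =>
        have hre : evalL q (Sum.inl a) * evalL q (Sum.inl b) = rhoP q ^ ((a+b) % q) := by
          show rhoP q ^ a * rhoP q ^ b = _
          rw [← pow_add, rho_pow_mod' q hq]
        by_cases hc : (a + b) % q = 0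
        · refine ⟨t, hl.tail', ?_⟩
          rw [evalW_cons, ← mul_assoc, hre, hc, pow_zero, one_mul]
        · refine ⟨Sum.inl ((a+b) % q) :: t, ⟨?_, ?_⟩, ?_⟩
          · intro w hw
            rcases List.mem_cons.mp hw with rfl | hw
            · have : (a+b) % q < q := Nat.mod_lt _ (by omega)
              exact ⟨by omega, by omega⟩
            · exact hl.1 w (by simp [hw])
          · obtain ⟨hhead, htail⟩ := List.isChain_cons.mp hl.2
            refine List.isChain_cons.mpr ⟨?_, htail⟩
            intro z hz
            simpa [altR] using hhead z hz
          · rw [evalW_cons, evalW_cons, ← mul_assoc, hre]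
            rfl

lemma repr_mul (q : ℕ) (hq : 3 ≤ q) :
    ∀ l, Red q l → ∀ g : Equiv.Perm RInf, (∃ m, Red q m ∧ evalW q m = g) →
    ∃ l', Red q l' ∧ evalW q l' = evalW q l * g := by
  intro l
  induction l with
  | nil =>
    intro _ g hg
    obtain ⟨m, h1, h2⟩ := hg
    exact ⟨m, h1, by rw [h2, evalW_nil, one_mul]⟩
  | cons x t ih =>
    intro hred g hg
    obtain ⟨m, hm, hme⟩ := ih hred.tail' g hg
    obtain ⟨l', h1, h2⟩ := repr_cons q hq x (hred.1 x (by simp)) m hm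
    exact ⟨l', h1, by rw [h2, hme, evalW_cons, mul_assoc]⟩

def invL (q : ℕ) : Letter → Letter
  | Sum.inl a => Sum.inl (q - a)
  | Sum.inr u => Sum.inr u

lemma evalL_invL (q : ℕ) (hq : 3 ≤ q) (x : Letter) (hx : okL q x) :
    evalL q (invL q x) = (evalL q x)⁻¹ := by
  cases x with
  | inr u => exact (inv_eq_of_mul_eq_one_right sigmaP_sq).symm
  | inl a =>
    obtain ⟨ha1, ha2⟩ := hx
    show rhoP q ^ (q - a) = (rhoP q ^ a)⁻¹
    refine (inv_eq_of_mul_eq_one_left ?_).symm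
    rw [← pow_add]
    have : q - a + a = q := by omega
    rw [this, rho_pow_q q hq]

lemma invL_isLeft (q : ℕ) (x : Letter) : (invL q x).isLeft = x.isLeft := by
  cases x <;> rfl

lemma repr_inv (q : ℕ) (hq : 3 ≤ q) (l : List Letter) (h : Red q l) :
    ∃ l', Red q l' ∧ evalW q l' = (evalW q l)⁻¹ := by
  refine ⟨(l.map (invL q)).reverse, ⟨?_, ?_⟩, ?_⟩
  · intro w hw
    rw [List.mem_reverse, List.mem_map] at hw
    obtain ⟨z, hz, rfl⟩ := hw
    have := h.1 z hz
    cases z with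
    | inr u => trivial
    | inl a =>
      obtain ⟨h1, h2⟩ := this
      exact ⟨by omega, by omega⟩
  · show List.IsChain altR _
    rw [List.isChain_reverse]
    have : List.Chain' (fun a b => altR (invL q a) (invL q b)) l := by
      refine List.IsChain.imp ?_ h.2
      intro a b hab
      simp [altR, invL_isLeft] at hab ⊢
      exact hab
    refine List.IsChain.imp ?_ ((List.isChain_map (invL q)).mpr this)
    intro a b hab
    exact fun hh => hab hh.symm
  · unfold evalW
    rw [List.map_reverse, List.map_map, List.prod_inv_reverse, List.map_map]
    refine congrArg List.prod (congrArg List.reverse (List.map_congr_left ?_))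
    intro a ha
    exact evalL_invL q hq a (h.1 a ha)

lemma exists_repr (q : ℕ) (hq : 3 ≤ q) {g : Equiv.Perm RInf} (hg : g ∈ Gq q) :
    ∃ l, Red q l ∧ evalW q l = g := by
  induction hg using Subgroup.closure_induction with
  | mem x hx =>
    rcases hx with hx | hx
    · exact ⟨[Sum.inr ()], ⟨by intro w hw; simp at hw; subst hw; trivial,
        List.isChain_singleton _⟩, by rw [evalW_singleton, hx]; rfl⟩
    · rw [Set.mem_singleton_iff] at hx
      refine ⟨[Sum.inl 1, Sum.inr ()], ⟨?_, ?_⟩, ?_⟩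
      · intro w hw
        rcases List.mem_cons.mp hw with rfl | hw
        · exact ⟨le_refl 1, by omega⟩
        · simp at hw; subst hw; trivial
      · show List.IsChain altR _
        rw [List.isChain_cons_cons]
        exact ⟨by simp [altR], List.isChain_singleton _⟩
      · rw [evalW_cons, evalW_singleton, hx]
        show rhoP q ^ 1 * sigmaP = tauP q
        rw [pow_one]
        exact rho_mul_sigma q
  | one => exact ⟨[], ⟨by intro w hw; simp at hw, List.isChain_nil⟩, evalW_nil q⟩
  | mul a b _ _ iha ihb =>
    obtain ⟨la, h1, h2⟩ := iha
    obtain ⟨l', h3, h4⟩ := repr_mul q hq la h1 b ihb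
    exact ⟨l', h3, by rw [h4, h2]⟩
  | inv a _ iha =>
    obtain ⟨la, h1, h2⟩ := iha
    obtain ⟨l', h3, h4⟩ := repr_inv q hq la h1
    exact ⟨l', h3, by rw [h4, h2]⟩

theorem stab_infty (q : ℕ) (hq : 3 ≤ q) {g : Equiv.Perm RInf} (hg : g ∈ Gq q)
    (hfix : g ∞ = ∞) : ∃ n : ℤ, g = tauP q ^ n := by
  obtain ⟨l, hred, rfl⟩ := exists_repr q hq hg
  exact evalW_infty_eq q hq l.length l le_rfl hred hfix

end Stmt7

namespace Stmt7
open Real Filter Topology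

lemma tauP_fun_eq (q : ℕ) : ⇑(tauP q) = OnePoint.map (· + lamq q) := by
  funext z; cases z <;> rfl

lemma tauP_inv_fun_eq (q : ℕ) : ⇑(tauP q)⁻¹ = OnePoint.map (· - lamq q) := by
  funext z; cases z <;> rfl

lemma continuous_onePoint_add (t : ℝ) : Continuous (OnePoint.map (· + t)) := by
  have h := (Homeomorph.addRight t).onePointCongr.continuous
  apply h.congr
  intro z
  cases z <;> rfl

lemma continuous_tauP (q : ℕ) : Continuous ⇑(tauP q) := by
  rw [tauP_fun_eq]; exact continuous_onePoint_add _

lemma continuous_tauP_inv (q : ℕ) : Continuous ⇑(tauP q)⁻¹ := by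
  rw [tauP_inv_fun_eq]
  have h := continuous_onePoint_add (-lamq q)
  apply h.congr
  intro z
  induction z using OnePoint.rec with
  | infty => rfl
  | coe x =>
    show _ = Option.some (x - lamq q)
    simp only [OnePoint.map]
    show Option.some (x + -lamq q) = Option.some (x - lamq q)
    rw [← sub_eq_add_neg]

lemma continuous_sigmaP : Continuous ⇑sigmaP := by
  rw [continuous_iff_continuousAt]
  intro z
  induction z using OnePoint.rec with
  | infty =>
    rw [OnePoint.continuousAt_infty']
    have hσ : sigmaP ∞ = ((0:ℝ) : RInf) := rfl
    rw [hσ, Filter.coclosedCompact_eq_cocompact]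
    have hev : ∀ᶠ y : ℝ in cocompact ℝ, (sigmaP ∘ (↑)) y = ((-y⁻¹ : ℝ) : RInf) := by
      have hmem : {y : ℝ | y ≠ 0} ∈ cocompact ℝ := by
        rw [mem_cocompact]
        exact ⟨{0}, isCompact_singleton, by intro y hy; simpa using hy⟩
      filter_upwards [hmem] with y hy
      show sigmaP ((y:ℝ):RInf) = _
      rw [sigmaP_coe_ne hy]
    rw [Filter.tendsto_congr' hev]
    have h1 : Filter.Tendsto (fun y : ℝ => -y⁻¹) (cocompact ℝ) (𝓝 0) := by
      rw [cocompact_eq_atBot_atTop]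
      apply Filter.Tendsto.mono_left _ le_rfl
      rw [Filter.tendsto_sup]
      constructor
      · have h := (tendsto_inv_atTop_zero (𝕜 := ℝ)).comp tendsto_neg_atBot_atTop
        apply h.congr'
        filter_upwards with y
        show (-y)⁻¹ = -y⁻¹
        rw [inv_neg]
      · have := tendsto_inv_atTop_zero (𝕜 := ℝ)
        simpa using this.neg
    have h2 : Filter.Tendsto ((↑) : ℝ → RInf) (𝓝 0) (𝓝 (((0:ℝ):RInf))) :=
      OnePoint.continuous_coe.continuousAt
    exact h2.comp h1
  | coe x =>
    rw [OnePoint.continuousAt_coe]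
    by_cases hx : x = 0
    · subst hx
      -- tends to ∞
      have hval : (sigmaP ∘ ((↑) : ℝ → RInf)) 0 = ∞ := by
        show sigmaP (((0:ℝ)):RInf) = ∞
        rw [sigmaP_coe]; simp
      rw [ContinuousAt, hval, OnePoint.hasBasis_nhds_infty.tendsto_right_iff]
      rintro s ⟨hscl, hscp⟩
      obtain ⟨M, hM⟩ := hscp.isBounded.subset_closedBall 0
      set R : ℝ := max M 0 with hR
      have hMR : s ⊆ Metric.closedBall 0 R :=
        hM.trans (Metric.closedBall_subset_closedBall (le_max_left _ _))
      have hRpos : 0 < R + 1 := by positivity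
      have hball : Metric.ball (0:ℝ) (R+1)⁻¹ ∈ 𝓝 (0:ℝ) :=
        Metric.ball_mem_nhds 0 (by positivity)
      filter_upwards [hball] with y hy
      by_cases hy0 : y = 0
      · subst hy0
        refine Or.inr ?_
        show sigmaP (((0:ℝ)):RInf) ∈ {∞}
        rw [sigmaP_coe]
        simp
      · refine Or.inl ?_
        refine ⟨-y⁻¹, ?_, by rw [Function.comp_apply, sigmaP_coe_ne hy0]⟩
        intro hus
        have h1 : |(-y⁻¹ : ℝ)| ≤ R := by
          have := hMR hus
          rw [Metric.mem_closedBall, Real.dist_eq, sub_zero] at this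
          exact this
        have h2 : |y| < (R+1)⁻¹ := by
          rw [Metric.mem_ball, Real.dist_eq, sub_zero] at hy
          exact hy
        have h3 : 0 < |y| := abs_pos.mpr hy0
        have h4 : |(-y⁻¹ : ℝ)| = |y|⁻¹ := by rw [abs_neg, abs_inv]
        rw [h4] at h1
        have h5 : |y| * (R+1) < 1 := by
          have := (mul_lt_mul_of_pos_right h2 hRpos)
          rwa [inv_mul_cancel₀ (ne_of_gt hRpos)] at this
        have h6 : (1:ℝ) ≤ |y| * R := by
          have := mul_le_mul_of_nonneg_left h1 (le_of_lt h3)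
          rwa [mul_inv_cancel₀ (ne_of_gt h3)] at this
        nlinarith
    · have hev : (sigmaP ∘ ((↑) : ℝ → RInf)) =ᶠ[𝓝 x] fun y => ((-y⁻¹ : ℝ) : RInf) := by
        have hmem : {y : ℝ | y ≠ 0} ∈ 𝓝 x := by
          apply IsOpen.mem_nhds (isOpen_ne) hx
        filter_upwards [hmem] with y hy
        show sigmaP ((y:ℝ):RInf) = _
        rw [sigmaP_coe_ne hy]
      apply ContinuousAt.congr _ hev.symm
      apply OnePoint.continuous_coe.continuousAt.comp
      exact ((continuousAt_inv₀ hx).neg)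

end Stmt7

namespace Stmt7
open Real Filter Topology Set

lemma continuous_Gq (q : ℕ) {g : Equiv.Perm RInf} (hg : g ∈ Gq q) :
    Continuous ⇑g ∧ Continuous ⇑g⁻¹ := by
  induction hg using Subgroup.closure_induction with
  | mem x hx =>
    rcases hx with hx | hx
    · subst hx
      exact ⟨continuous_sigmaP, continuous_sigmaP⟩
    · rw [Set.mem_singleton_iff] at hx
      subst hx
      exact ⟨continuous_tauP q, continuous_tauP_inv q⟩
  | one => exact ⟨continuous_id, continuous_id⟩
  | mul a b _ _ iha ihb => exact ⟨iha.1.comp ihb.1, ihb.2.comp iha.2⟩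
  | inv a _ iha => exact ⟨iha.2, by rw [inv_inv]; exact iha.1⟩

noncomputable def gqHomeo (q : ℕ) (g : Equiv.Perm RInf) (hg : g ∈ Gq q) : RInf ≃ₜ RInf where
  toEquiv := g
  continuous_toFun := (continuous_Gq q hg).1
  continuous_invFun := (continuous_Gq q hg).2

@[simp] lemma gqHomeo_apply (q : ℕ) (g : Equiv.Perm RInf) (hg : g ∈ Gq q) (z : RInf) :
    gqHomeo q g hg z = g z := rfl

lemma image_connectedComponentIn (φ : RInf ≃ₜ RInf) {F : Set RInf} {y : RInf} (hy : y ∈ F) :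
    ⇑φ '' connectedComponentIn F y = connectedComponentIn (⇑φ '' F) (φ y) := by
  apply subset_antisymm
  · exact φ.continuous.image_connectedComponentIn_subset hy
  · intro z hz
    have h2 := φ.symm.continuous.image_connectedComponentIn_subset
      (a := φ y) (s := ⇑φ '' F) (Set.mem_image_of_mem _ hy)
    have hz' := h2 (Set.mem_image_of_mem _ hz)
    have hFF : ⇑φ.symm '' (⇑φ '' F) = F := by
      rw [← Set.image_comp]
      simp
    have hyy : φ.symm (φ y) = y := φ.symm_apply_apply y
    rw [hFF, hyy] at hz'
    exact ⟨φ.symm z, hz', φ.apply_symm_apply z⟩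

lemma sepSide_image (φ : RInf ≃ₜ RInf) {u v x y : RInf} (h : SepSide u v x y) :
    SepSide (φ u) (φ v) (φ x) (φ y) := by
  obtain ⟨hy, hx⟩ := h
  have hset : ({φ u, φ v}ᶜ : Set RInf) = ⇑φ '' ({u, v}ᶜ) := by
    rw [← Set.image_pair, ← Set.image_compl_eq φ.bijective]
  constructor
  · rw [hset]
    exact Set.mem_image_of_mem _ hy
  · rw [hset, ← image_connectedComponentIn φ hy]
    rintro ⟨w, hw, hwx⟩
    exact hx ((φ.injective hwx) ▸ hw)

lemma sepSide_iff (φ : RInf ≃ₜ RInf) (u v x y : RInf) :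
    SepSide (φ u) (φ v) (φ x) (φ y) ↔ SepSide u v x y := by
  constructor
  · intro h
    have := sepSide_image φ.symm h
    simpa using this
  · exact sepSide_image φ

lemma connectedComponentIn_union_open {A B : Set RInf} (hA : IsOpen A) (hB : IsOpen B)
    (hdisj : A ∩ B = ∅) (hAc : IsPreconnected A) {y : RInf} (hy : y ∈ A) :
    connectedComponentIn (A ∪ B) y = A := by
  apply subset_antisymm
  · intro z hz
    by_contra hzA
    have hzB : z ∈ B := (connectedComponentIn_subset _ _ hz).resolve_left hzA
    have hpc : IsPreconnected (connectedComponentIn (A ∪ B) y) :=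
      isPreconnected_connectedComponentIn
    have hne := hpc A B hA hB (connectedComponentIn_subset _ _)
      ⟨y, mem_connectedComponentIn (Set.mem_union_left _ hy), hy⟩ ⟨z, hz, hzB⟩
    obtain ⟨w, _, hw2⟩ := hne
    rw [hdisj] at hw2
    exact hw2
  · exact hAc.subset_connectedComponentIn hy Set.subset_union_left

lemma infty_mem_closure_of_unbounded {s : Set ℝ}
    (h : ∀ K : Set ℝ, IsCompact K → ∃ r ∈ s, r ∉ K) :
    ∞ ∈ closure ((↑) '' s : Set RInf) := by
  rw [mem_closure_iff_nhds]
  intro t ht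
  obtain ⟨K, ⟨hKc, hKcp⟩, hsub⟩ := (OnePoint.hasBasis_nhds_infty).mem_iff.mp ht
  obtain ⟨r, hrs, hrK⟩ := h K hKcp
  exact ⟨((r:ℝ):RInf), hsub (Or.inl ⟨r, hrK, rfl⟩), Set.mem_image_of_mem _ hrs⟩

lemma unbounded_Iio (b : ℝ) : ∀ K : Set ℝ, IsCompact K → ∃ r ∈ Set.Iio b, r ∉ K := by
  intro K hK
  obtain ⟨M, hM⟩ := hK.isBounded.subset_closedBall 0
  set r := min (-(M+1)) (b-1) with hr
  refine ⟨r, ?_, ?_⟩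
  · have : r ≤ b - 1 := min_le_right _ _
    simp only [Set.mem_Iio]
    linarith
  · intro hrK
    have h1 := hM hrK
    rw [Metric.mem_closedBall, Real.dist_eq, sub_zero] at h1
    have h2 : r ≤ -(M+1) := min_le_left _ _
    have h3 : -r ≤ |r| := neg_le_abs r
    linarith

lemma unbounded_Ioi (c : ℝ) : ∀ K : Set ℝ, IsCompact K → ∃ r ∈ Set.Ioi c, r ∉ K := by
  intro K hK
  obtain ⟨M, hM⟩ := hK.isBounded.subset_closedBall 0
  set r := max (M+1) (c+1) with hr
  refine ⟨r, ?_, ?_⟩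
  · have : c + 1 ≤ r := le_max_right _ _
    simp only [Set.mem_Ioi]
    linarith
  · intro hrK
    have h1 := hM hrK
    rw [Metric.mem_closedBall, Real.dist_eq, sub_zero] at h1
    have h2 : M + 1 ≤ r := le_max_left _ _
    have h3 : r ≤ |r| := le_abs_self r
    linarith

end Stmt7

namespace Stmt7
open Real Filter Topology Set

lemma sepSide_infty_iff {b c : ℝ} (hbc : b < c) (y : RInf) :
    SepSide ((b:ℝ):RInf) ((c:ℝ):RInf) ∞ y ↔ ∃ t : ℝ, y = ((t:ℝ):RInf) ∧ b < t ∧ t < c := by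
  set A : Set RInf := (↑) '' Set.Ioo b c with hA
  set B : Set RInf := ((↑) '' Set.Icc b c)ᶜ with hgB
  have hS : ({((b:ℝ):RInf), ((c:ℝ):RInf)}ᶜ : Set RInf) = A ∪ B := by
    ext z
    constructor
    · intro hz
      simp only [Set.mem_compl_iff, Set.mem_insert_iff, Set.mem_singleton_iff] at hz
      push_neg at hz
      obtain ⟨hzb, hzc⟩ := hz
      induction z using OnePoint.rec with
      | infty =>
        refine Or.inr ?_
        exact OnePoint.infty_notMem_image_coe
      | coe t =>
        have htb : t ≠ b := fun h => hzb (by rw [h])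
        have htc : t ≠ c := fun h => hzc (by rw [h])
        rcases lt_or_ge t b with h | h
        · refine Or.inr ?_
          rintro ⟨u, hu, huz⟩
          rw [OnePoint.coe_eq_coe] at huz
          subst huz
          exact absurd hu.1 (not_le.mpr h)
        · rcases lt_or_ge t c with h2 | h2
          · exact Or.inl ⟨t, ⟨lt_of_le_of_ne h (Ne.symm htb), h2⟩, rfl⟩
          · refine Or.inr ?_
            rintro ⟨u, hu, huz⟩
            rw [OnePoint.coe_eq_coe] at huz
            subst huz
            exact absurd hu.2 (not_le.mpr (lt_of_le_of_ne h2 (Ne.symm htc)))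
    · intro hz
      simp only [Set.mem_compl_iff, Set.mem_insert_iff, Set.mem_singleton_iff]
      push_neg
      rcases hz with ⟨t, ⟨h1, h2⟩, rfl⟩ | hz
      · constructor
        · exact fun hh => (ne_of_gt h1) (OnePoint.coe_eq_coe.mp hh)
        · exact fun hh => (ne_of_lt h2) (OnePoint.coe_eq_coe.mp hh)
      · constructor
        · rintro rfl; exact hz ⟨b, ⟨le_refl b, le_of_lt hbc⟩, rfl⟩
        · rintro rfl; exact hz ⟨c, ⟨le_of_lt hbc, le_refl c⟩, rfl⟩
  have hAopen : IsOpen A := OnePoint.isOpen_image_coe.2 isOpen_Ioo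
  have hBopen : IsOpen B :=
    isOpen_compl_iff.mpr (OnePoint.isClosed_image_coe.2 ⟨isClosed_Icc, isCompact_Icc⟩)
  have hdisj : A ∩ B = ∅ := by
    rw [Set.eq_empty_iff_forall_notMem]
    rintro z ⟨⟨t, ht, rfl⟩, hzB⟩
    exact hzB ⟨t, Set.Ioo_subset_Icc_self ht, rfl⟩
  have hAconn : IsPreconnected A :=
    isPreconnected_Ioo.image _ OnePoint.continuous_coe.continuousOn
  have hC1 : IsPreconnected (((↑) '' Set.Iio b : Set RInf) ∪ {∞}) := by
    apply IsPreconnected.subset_closure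
      (isPreconnected_Iio.image _ OnePoint.continuous_coe.continuousOn)
      Set.subset_union_left
    apply Set.union_subset subset_closure
    intro z hz
    rw [Set.mem_singleton_iff] at hz
    subst hz
    exact infty_mem_closure_of_unbounded (unbounded_Iio b)
  have hC2 : IsPreconnected (((↑) '' Set.Ioi c : Set RInf) ∪ {∞}) := by
    apply IsPreconnected.subset_closure
      (isPreconnected_Ioi.image _ OnePoint.continuous_coe.continuousOn)
      Set.subset_union_left
    apply Set.union_subset subset_closure
    intro z hz
    rw [Set.mem_singleton_iff] at hz
    subst hz
    exact infty_mem_closure_of_unbounded (unbounded_Ioi c)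
  have hBeq : B = (((↑) '' Set.Iio b : Set RInf) ∪ {∞}) ∪ (((↑) '' Set.Ioi c : Set RInf) ∪ {∞}) := by
    ext z
    induction z using OnePoint.rec with
    | infty =>
      constructor
      · intro _
        exact Or.inl (Or.inr rfl)
      · intro _
        exact OnePoint.infty_notMem_image_coe
    | coe t =>
      constructor
      · intro hz
        have : t ∉ Set.Icc b c := by
          intro ht
          exact hz ⟨t, ht, rfl⟩
        rw [Set.mem_Icc, not_and_or, not_le, not_le] at this
        rcases this with h | h
        · exact Or.inl (Or.inl ⟨t, h, rfl⟩)
        · exact Or.inr (Or.inl ⟨t, h, rfl⟩)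
      · intro hz
        rintro ⟨u, hu, huz⟩
        rw [OnePoint.coe_eq_coe] at huz
        subst huz
        rcases hz with hz | hz
        · rcases hz with ⟨u', hu', hu'z⟩ | hz
          · rw [OnePoint.coe_eq_coe] at hu'z
            subst hu'z
            exact absurd hu.1 (not_le.mpr hu')
          · exact OnePoint.coe_ne_infty _ hz
        · rcases hz with ⟨u', hu', hu'z⟩ | hz
          · rw [OnePoint.coe_eq_coe] at hu'z
            subst hu'z
            exact absurd hu.2 (not_le.mpr hu')
          · exact OnePoint.coe_ne_infty _ hz
  have hBconn : IsPreconnected B := by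
    rw [hBeq]
    exact IsPreconnected.union ∞ (Or.inr rfl) (Or.inr rfl) hC1 hC2
  have hinftyB : ∞ ∈ B := OnePoint.infty_notMem_image_coe
  constructor
  · rintro ⟨hy, hx⟩
    rw [hS] at hy
    rcases hy with ⟨t, ht, rfl⟩ | hyB
    · exact ⟨t, rfl, ht.1, ht.2⟩
    · exfalso
      apply hx
      have hsub : B ⊆ connectedComponentIn ({((b:ℝ):RInf), ((c:ℝ):RInf)}ᶜ : Set RInf) y := by
        rw [hS]
        exact hBconn.subset_connectedComponentIn hyB Set.subset_union_right
      exact hsub hinftyB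
  · rintro ⟨t, rfl, ht1, ht2⟩
    constructor
    · rw [hS]
      exact Or.inl ⟨t, ⟨ht1, ht2⟩, rfl⟩
    · rw [hS, connectedComponentIn_union_open hAopen hBopen hdisj hAconn ⟨t, ⟨ht1, ht2⟩, rfl⟩]
      exact fun h => OnePoint.infty_notMem_image_coe h

end Stmt7

namespace Stmt7
open Real

lemma rho_zpow_neg_one_infty (q : ℕ) : (rhoP q ^ (-1:ℤ)) ∞ = ((0:ℝ):RInf) := by
  rw [zpow_neg_one]
  have h := congrArg (fun u => (rhoP q)⁻¹ u) (rho_zero q)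
  simpa using h.symm

lemma rho_zpow_one_infty (q : ℕ) : (rhoP q ^ (1:ℤ)) ∞ = ((lamq q : ℝ):RInf) := by
  rw [zpow_one, rhoP_infty]

lemma fareyAdj_map (q : ℕ) {g : Equiv.Perm RInf} (hg : g ∈ Gq q) {u v : RInf}
    (h : FareyAdj q u v) : FareyAdj q (g u) (g v) := by
  obtain ⟨hne, g₀, hg₀, hcase⟩ := h
  refine ⟨fun hh => hne (g.injective hh), g * g₀, mul_mem hg hg₀, ?_⟩
  rcases hcase with ⟨h1, h2⟩ | ⟨h1, h2⟩
  · exact Or.inl ⟨by rw [Equiv.Perm.mul_apply, h1], by rw [Equiv.Perm.mul_apply, h2]⟩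
  · exact Or.inr ⟨by rw [Equiv.Perm.mul_apply, h1], by rw [Equiv.Perm.mul_apply, h2]⟩

lemma main_inf (q : ℕ) (hq : 3 ≤ q) (y : RInf) (hy : y ≠ ∞) (hnadj : ¬ FareyAdj q ∞ y) :
    ∃! P : Set RInf, ∃ g ∈ Gq q, ∃ i : ℤ,
      P = ⇑g '' V0 q ∧ g ((rhoP q ^ i) ∞) = ∞ ∧
      SepSide (g ((rhoP q ^ (i - 1)) ∞)) (g ((rhoP q ^ (i + 1)) ∞)) ∞ y := by
  have hlam := lam_pos hq
  induction y using OnePoint.rec with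
  | infty => exact absurd rfl hy
  | coe t =>
  have hnot : ∀ n : ℤ, t ≠ n * lamq q := by
    intro n h
    apply hnadj
    refine ⟨(OnePoint.infty_ne_coe t), tauP q ^ n * sigmaP,
      mul_mem (zpow_mem (tauP_mem q) n) (sigmaP_mem q), Or.inl ⟨?_, ?_⟩⟩
    · show (tauP q ^ n) (sigmaP ((0:ℝ):RInf)) = ∞
      rw [sigmaP_coe]
      simp only [if_pos rfl]
      exact tau_zpow_infty q n
    · show (tauP q ^ n) (sigmaP ∞) = ((t:ℝ):RInf)
      rw [sigmaP_infty, tau_zpow_coe, h]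
      norm_num
  set n : ℤ := ⌊t / lamq q⌋ with hn
  have h1 : (n:ℝ) * lamq q < t := by
    have hfl := Int.floor_le (t / lamq q)
    have h' : (n:ℝ) * lamq q ≤ t := by
      rw [hn]
      calc (⌊t / lamq q⌋ : ℝ) * lamq q ≤ (t / lamq q) * lamq q :=
            mul_le_mul_of_nonneg_right hfl (le_of_lt hlam)
        _ = t := by field_simp
    exact lt_of_le_of_ne h' (fun hh => hnot n hh.symm)
  have h2 : t < ((n:ℝ) + 1) * lamq q := by
    have hfl := Int.lt_floor_add_one (t / lamq q)
    calc t = (t / lamq q) * lamq q := by field_simp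
      _ < ((n:ℝ) + 1) * lamq q := by
          apply mul_lt_mul_of_pos_right _ hlam
          rw [hn]; push_cast; exact_mod_cast hfl
  have key : ∀ g ∈ Gq q, ∀ i : ℤ, g ((rhoP q ^ i) ∞) = ∞ →
      ∃ m : ℤ, ⇑g '' V0 q = ⇑(tauP q ^ m) '' V0 q ∧
        g ((rhoP q ^ (i - 1)) ∞) = (((m:ℝ) * lamq q : ℝ):RInf) ∧
        g ((rhoP q ^ (i + 1)) ∞) = ((((m:ℝ) + 1) * lamq q : ℝ):RInf) := by
    intro g hg i hfix
    have hmem : g * rhoP q ^ i ∈ Gq q := mul_mem hg (zpow_mem (rhoP_mem q) i)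
    obtain ⟨m, hm⟩ := stab_infty q hq hmem hfix
    have hginv : g = tauP q ^ m * (rhoP q ^ i)⁻¹ := eq_mul_inv_of_mul_eq hm
    refine ⟨m, ?_, ?_, ?_⟩
    · rw [hginv]
      have himg : ⇑(tauP q ^ m * (rhoP q ^ i)⁻¹) '' V0 q
          = ⇑(tauP q ^ m) '' (⇑(rhoP q ^ i)⁻¹ '' V0 q) := by
        rw [← Set.image_comp]; rfl
      rw [himg, ← zpow_neg, rho_zpow_image_V0 q hq]
    · rw [hginv]
      show (tauP q ^ m) ((rhoP q ^ i)⁻¹ ((rhoP q ^ (i - 1)) ∞)) = _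
      have e : (rhoP q ^ i)⁻¹ ((rhoP q ^ (i - 1)) ∞) = (rhoP q ^ (-1:ℤ)) ∞ := by
        rw [← zpow_neg, ← Equiv.Perm.mul_apply, ← zpow_add]
        have e2 : -i + (i - 1) = (-1:ℤ) := by ring
        rw [e2]
      rw [e, rho_zpow_neg_one_infty, tau_zpow_coe]
      norm_num
    · rw [hginv]
      show (tauP q ^ m) ((rhoP q ^ i)⁻¹ ((rhoP q ^ (i + 1)) ∞)) = _
      have e : (rhoP q ^ i)⁻¹ ((rhoP q ^ (i + 1)) ∞) = (rhoP q ^ (1:ℤ)) ∞ := by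
        rw [← zpow_neg, ← Equiv.Perm.mul_apply, ← zpow_add]
        have e2 : -i + (i + 1) = (1:ℤ) := by ring
        rw [e2]
      rw [e, rho_zpow_one_infty, tau_zpow_coe]
      congr 1
      ring
  refine ⟨⇑(tauP q ^ n) '' V0 q, ⟨tauP q ^ n, zpow_mem (tauP_mem q) n, 0, rfl, ?_, ?_⟩, ?_⟩
  · show (tauP q ^ n) ((rhoP q ^ (0:ℤ)) ∞) = ∞
    rw [zpow_zero]
    show (tauP q ^ n) ∞ = ∞
    exact tau_zpow_infty q n
  · obtain ⟨m, hPm, hu, hv⟩ := key (tauP q ^ n) (zpow_mem (tauP_mem q) n) 0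
      (by rw [zpow_zero]; exact tau_zpow_infty q n)
    rw [hu, hv]
    rw [sepSide_infty_iff (show (m:ℝ) * lamq q < ((m:ℝ) + 1) * lamq q by nlinarith)]
    -- need m = n here: derive from hu directly
    have hmn : m = n := by
      have h0 : (tauP q ^ n) ((rhoP q ^ ((0:ℤ) - 1)) ∞) = (((n:ℝ) * lamq q : ℝ):RInf) := by
        have e : ((0:ℤ) - 1) = (-1 : ℤ) := by norm_num
        rw [e, rho_zpow_neg_one_infty, tau_zpow_coe]
        norm_num
      rw [h0] at hu
      have hcc := OnePoint.coe_eq_coe.mp hu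
      have hne : lamq q ≠ 0 := ne_of_gt hlam
      have hnm : (n:ℝ) = (m:ℝ) := mul_right_cancel₀ hne hcc
      exact_mod_cast hnm.symm
    subst hmn
    exact ⟨t, rfl, h1, h2⟩
  · rintro P ⟨g, hg, i, hP, hfix, hsep⟩
    obtain ⟨m, hPm, hu, hv⟩ := key g hg i hfix
    rw [hu, hv] at hsep
    rw [sepSide_infty_iff (show (m:ℝ) * lamq q < ((m:ℝ) + 1) * lamq q by nlinarith)] at hsep
    obtain ⟨t', ht', hmt1, hmt2⟩ := hsep
    have htt : t' = t := (OnePoint.coe_eq_coe.mp ht').symm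
    subst htt
    have hmn : m = n := by
      rw [hn]
      symm
      rw [Int.floor_eq_iff]
      constructor
      · exact le_of_lt ((lt_div_iff₀ hlam).mpr (by linarith))
      · push_cast
        exact (div_lt_iff₀ hlam).mpr (by linarith)
    rw [hP, hPm, hmn]

lemma perm_apply_inv_self (h : Equiv.Perm RInf) (z : RInf) : h (h⁻¹ z) = z :=
  Equiv.apply_symm_apply h z

lemma perm_inv_apply_self (h : Equiv.Perm RInf) (z : RInf) : h⁻¹ (h z) = z :=
  Equiv.symm_apply_apply h z

end Stmt7


/-- there is a unique face `P` of `𝓕_q` incident to `x` such that `y`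
lies in the component of the complement of the two neighbours of `x` on `P` not
containing `x`. -/
theorem stmt7 (q : ℕ) (hq : 3 ≤ q) (x y : RInf)
    (hx : FareyVertex q x) (hy : FareyVertex q y) (hxy : x ≠ y)
    (hnadj : ¬ FareyAdj q x y) :
    ∃! P : Set RInf, ∃ g ∈ Gq q, ∃ i : ℤ,
      P = ⇑g '' V0 q ∧ g ((rhoP q ^ i) ∞) = x ∧
      SepSide (g ((rhoP q ^ (i - 1)) ∞)) (g ((rhoP q ^ (i + 1)) ∞)) x y := by
  classical
  obtain ⟨h, hh, hhx⟩ := hx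
  have hinvx : h⁻¹ x = ∞ := by
    rw [← hhx, Stmt7.perm_inv_apply_self]
  have hyne : h⁻¹ y ≠ ∞ := by
    intro he
    apply hxy
    have := congrArg h he
    rw [Stmt7.perm_apply_inv_self, hhx] at this
    exact this.symm
  have hnadj' : ¬ FareyAdj q ∞ (h⁻¹ y) := by
    intro hadj
    have := Stmt7.fareyAdj_map q hh hadj
    rw [Stmt7.perm_apply_inv_self, hhx] at this
    exact hnadj this
  obtain ⟨P₀, hP₀, huniq⟩ := Stmt7.main_inf q hq (h⁻¹ y) hyne hnadj'
  refine ⟨⇑h '' P₀, ?_, ?_⟩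
  · obtain ⟨g, hg, i, hPg, hfix, hsep⟩ := hP₀
    refine ⟨h * g, mul_mem hh hg, i, ?_, ?_, ?_⟩
    · rw [hPg, ← Set.image_comp]
      rfl
    · show h (g ((rhoP q ^ i) ∞)) = x
      rw [hfix, hhx]
    · have hs := Stmt7.sepSide_image (Stmt7.gqHomeo q h hh) hsep
      simp only [Stmt7.gqHomeo_apply] at hs
      rw [Stmt7.perm_apply_inv_self, hhx] at hs
      exact hs
  · rintro P ⟨g, hg, i, hP, hfix, hsep⟩
    have hQ : ∃ g' ∈ Gq q, ∃ i' : ℤ, (⇑h⁻¹ '' P) = ⇑g' '' V0 q ∧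
        g' ((rhoP q ^ i') ∞) = ∞ ∧
        SepSide (g' ((rhoP q ^ (i' - 1)) ∞)) (g' ((rhoP q ^ (i' + 1)) ∞)) ∞ (h⁻¹ y) := by
      refine ⟨h⁻¹ * g, mul_mem (inv_mem hh) hg, i, ?_, ?_, ?_⟩
      · rw [hP, ← Set.image_comp]
        rfl
      · show h⁻¹ (g ((rhoP q ^ i) ∞)) = ∞
        rw [hfix, hinvx]
      · have hs := Stmt7.sepSide_image (Stmt7.gqHomeo q h⁻¹ (inv_mem hh)) hsep
        simp only [Stmt7.gqHomeo_apply] at hs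
        rw [hinvx] at hs
        exact hs
    have hPP := huniq _ hQ
    have : P = ⇑h '' (⇑h⁻¹ '' P) := by
      rw [← Set.image_comp]
      have : ⇑h ∘ ⇑h⁻¹ = id := by
        funext z
        exact Stmt7.perm_apply_inv_self h z
      rw [this, Set.image_id]
    rw [this, hPP]
end
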